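/- arXiv:1509.05168 — 6 statements merged into one kernel-verified Lean document; each statement's English description precedes it below -/
import Mathlib

section
/- Let x ∈ ℝ × ℝ^{n-1} and let a be an element of the Lorentz cone K^n such that x^T a' > 0, where a' = (a₀, -ā) is the reflection of a. Then there exists T ≥ 0 such that for all t > T, the point x + t·a lies in the interior of K^n. -/
open scoped RealInnerProductSpace

/-- **Lemma 1.**  Let `x ∈ ℝ × ℝ^k` and let `a` be an element of the Lorentz cone
`K^{k+1} = {z = (z₀, z̄) : ‖z̄‖ ≤ z₀}` such that `xᵀa' > 0`, where `a' = (a₀, -ā)` is the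
reflection of `a` (so `xᵀa' = x₀a₀ - ⟪x̄, ā⟫`).  Then there exists `T ≥ 0` such that for all
`t > T`, the point `x + t • a` lies in the interior of the Lorentz cone. -/
theorem lorentz_eventually_interior {k : ℕ} (x a : ℝ × EuclideanSpace ℝ (Fin k))
    (ha : a ∈ {z : ℝ × EuclideanSpace ℝ (Fin k) | ‖z.2‖ ≤ z.1})
    (hxa : 0 < x.1 * a.1 - ⟪x.2, a.2⟫) :
    ∃ T : ℝ, 0 ≤ T ∧ ∀ t : ℝ, T < t →
      x + t • a ∈ interior {z : ℝ × EuclideanSpace ℝ (Fin k) | ‖z.2‖ ≤ z.1} := by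
  set c : ℝ := x.1 * a.1 - ⟪x.2, a.2⟫ with hc
  -- a.1 > 0
  simp only [Set.mem_setOf_eq] at ha
  have ha1 : 0 < a.1 := by
    rcases lt_or_eq_of_le (le_trans (norm_nonneg _) ha) with h | h
    · exact h
    · exfalso
      have h2 : a.2 = 0 := by
        have : ‖a.2‖ ≤ 0 := by rw [h]; exact ha
        simpa using le_antisymm this (norm_nonneg _)
      rw [hc, ← h, h2] at hxa
      simp at hxa
  -- open subset lemma
  have hU : {z : ℝ × EuclideanSpace ℝ (Fin k) | ‖z.2‖ < z.1} ⊆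
      interior {z : ℝ × EuclideanSpace ℝ (Fin k) | ‖z.2‖ ≤ z.1} := by
    exact interior_maximal (fun z (hz : ‖z.2‖ < z.1) => le_of_lt hz)
      (isOpen_lt (continuous_norm.comp continuous_snd) continuous_fst)
  refine ⟨max 0 (max ((‖x.2‖ ^ 2 - x.1 ^ 2) / (2 * c)) (-x.1 / a.1)), le_max_left _ _, ?_⟩
  intro t ht
  have ht0 : 0 < t := lt_of_le_of_lt (le_max_left _ _) ht
  have ht1 : (‖x.2‖ ^ 2 - x.1 ^ 2) / (2 * c) < t :=
    lt_of_le_of_lt (le_trans (le_max_left _ _) (le_max_right _ _)) ht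
  have ht2 : -x.1 / a.1 < t :=
    lt_of_le_of_lt (le_trans (le_max_right _ _) (le_max_right _ _)) ht
  apply hU
  simp only [Set.mem_setOf_eq, Prod.fst_add, Prod.snd_add, Prod.smul_fst, Prod.smul_snd,
    smul_eq_mul]
  have hpos : 0 < x.1 + t * a.1 := by
    have := (div_lt_iff₀ ha1).mp ht2
    nlinarith
  have hsq : ‖x.2 + t • a.2‖ ^ 2 < (x.1 + t * a.1) ^ 2 := by
    have hexp : ‖x.2 + t • a.2‖ ^ 2 = ‖x.2‖ ^ 2 + 2 * (t * ⟪x.2, a.2⟫) + t ^ 2 * ‖a.2‖ ^ 2 := by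
      rw [norm_add_sq_real, real_inner_smul_right, norm_smul]
      ring_nf
      rw [Real.norm_eq_abs, sq_abs]
    have h1 : ‖x.2‖ ^ 2 - x.1 ^ 2 < t * (2 * c) := by
      have h2c : 0 < 2 * c := by linarith
      calc ‖x.2‖ ^ 2 - x.1 ^ 2 = (‖x.2‖ ^ 2 - x.1 ^ 2) / (2 * c) * (2 * c) := by
            field_simp
        _ < t * (2 * c) := by
            exact mul_lt_mul_of_pos_right ht1 h2c
    have h2 : ‖a.2‖ ^ 2 ≤ a.1 ^ 2 := by nlinarith [norm_nonneg a.2]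
    rw [hexp, hc] at *
    nlinarith
  nlinarith [norm_nonneg (x.2 + t • a.2), sq_nonneg (‖x.2 + t • a.2‖ - (x.1 + t * a.1))]
end

section
/- If x and y both belong to the Lorentz cone K^n and x^T y = 0, then x₀·ȳ + y₀·x̄ = 0, where x = (x₀, x̄) and y = (y₀, ȳ). -/
open scoped RealInnerProductSpace

/-- If `x = (x₀, x̄)` and `y = (y₀, ȳ)` both belong to the Lorentz cone
`K^{k+1} = {z = (z₀, z̄) : ‖z̄‖ ≤ z₀}` and `xᵀy = x₀y₀ + ⟪x̄, ȳ⟫ = 0`, then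
`x₀ • ȳ + y₀ • x̄ = 0`. -/
theorem lorentz_orthogonal {k : ℕ} (x y : ℝ × EuclideanSpace ℝ (Fin k))
    (hx : ‖x.2‖ ≤ x.1) (hy : ‖y.2‖ ≤ y.1)
    (hxy : x.1 * y.1 + ⟪x.2, y.2⟫ = 0) :
    x.1 • y.2 + y.1 • x.2 = 0 := by
  have hx0 : 0 ≤ x.1 := le_trans (norm_nonneg _) hx
  have hy0 : 0 ≤ y.1 := le_trans (norm_nonneg _) hy
  have h : ‖x.1 • y.2 + y.1 • x.2‖ ^ 2 ≤ 0 := by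
    rw [norm_add_sq_real, norm_smul, norm_smul, real_inner_smul_left,
      real_inner_smul_right, Real.norm_eq_abs, Real.norm_eq_abs,
      abs_of_nonneg hx0, abs_of_nonneg hy0]
    nlinarith [mul_le_mul_of_nonneg_left (pow_le_pow_left₀ (norm_nonneg y.2) hy 2) (sq_nonneg x.1),
      mul_le_mul_of_nonneg_left (pow_le_pow_left₀ (norm_nonneg x.2) hx 2) (sq_nonneg y.1),
      mul_nonneg hx0 hy0, real_inner_comm x.2 y.2]
  have h2 : ‖x.1 • y.2 + y.1 • x.2‖ = 0 := by
    nlinarith [norm_nonneg (x.1 • y.2 + y.1 • x.2)]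
  simpa using h2
end

section
/- Let a be a nonzero element of the boundary of the Lorentz cone K^n (i.e., a ∈ K^n, a ≠ 0, and a₀ = ‖ā‖), and let s ∈ K^n satisfy s^T a = 0. Then there exists λ ≥ 0 such that s = λ·a', where a' = (a₀, -ā) is the reflection of a. -/
open scoped RealInnerProductSpace

/-- Let `a` be a nonzero element of the boundary of the Lorentz cone
`K^{k+1} = {z = (z₀, z̄) : ‖z̄‖ ≤ z₀}` (i.e. `a ∈ K^{k+1}`, `a ≠ 0` and `a₀ = ‖ā‖`), and let
`s ∈ K^{k+1}` satisfy `sᵀa = s₀a₀ + ⟪s̄, ā⟫ = 0`.  Then there exists `λ ≥ 0` such that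
`s = λ • a'`, where `a' = (a₀, -ā)` is the reflection of `a`. -/
theorem lorentz_orthogonal_boundary {k : ℕ} (a s : ℝ × EuclideanSpace ℝ (Fin k))
    (haK : ‖a.2‖ ≤ a.1) (ha0 : a ≠ 0) (hbd : a.1 = ‖a.2‖)
    (hs : ‖s.2‖ ≤ s.1) (hsa : s.1 * a.1 + ⟪s.2, a.2⟫ = 0) :
    ∃ lam : ℝ, 0 ≤ lam ∧ s = lam • ((a.1, -a.2) : ℝ × EuclideanSpace ℝ (Fin k)) := by
  have ha1pos : 0 < a.1 := by
    rcases lt_or_eq_of_le (hbd ▸ norm_nonneg a.2) with h | h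
    · exact h
    · exfalso
      apply ha0
      have h2 : a.2 = 0 := by
        have : ‖a.2‖ = 0 := by linarith [hbd]
        simpa using this
      have : a = (a.1, a.2) := rfl
      rw [this, ← h, h2]
      rfl
  have hs0 : 0 ≤ s.1 := le_trans (norm_nonneg _) hs
  -- Cauchy-Schwarz lower bound
  have hcs : -(‖s.2‖ * ‖a.2‖) ≤ ⟪s.2, a.2⟫ := neg_le_of_abs_le (abs_real_inner_le_norm _ _)
  have hle : s.1 * a.1 ≤ ‖s.2‖ * ‖a.2‖ := by nlinarith
  have hge : ‖s.2‖ * ‖a.2‖ ≤ s.1 * a.1 := by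
    have := mul_le_mul_of_nonneg_right hs (norm_nonneg a.2)
    calc ‖s.2‖ * ‖a.2‖ ≤ s.1 * ‖a.2‖ := this
      _ = s.1 * a.1 := by rw [← hbd]
  have heq : ‖s.2‖ * ‖a.2‖ = s.1 * a.1 := le_antisymm hge hle
  have hns : ‖s.2‖ = s.1 := by
    have : ‖s.2‖ * a.1 = s.1 * a.1 := by rw [← heq, hbd]
    exact mul_right_cancel₀ (ne_of_gt ha1pos) this
  have hinner : ⟪s.2, a.2⟫ = -(s.1 * a.1) := by linarith
  -- show a.1 • s.2 + s.1 • a.2 = 0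
  have hzero : a.1 • s.2 + s.1 • a.2 = 0 := by
    have hn2 : ‖a.1 • s.2 + s.1 • a.2‖ ^ 2 = 0 := by
      rw [← real_inner_self_eq_norm_sq, inner_add_add_self]
      have h1 : ‖a.1 • s.2‖ ^ 2 = a.1 ^ 2 * ‖s.2‖ ^ 2 := by
        rw [norm_smul]; simp [mul_pow, sq_abs]
      have h2 : ‖s.1 • a.2‖ ^ 2 = s.1 ^ 2 * ‖a.2‖ ^ 2 := by
        rw [norm_smul]; simp [mul_pow, sq_abs]
      simp only [real_inner_smul_left, real_inner_smul_right]
      rw [real_inner_self_eq_norm_sq, real_inner_self_eq_norm_sq, real_inner_comm s.2 a.2,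
        hinner, hns, ← hbd]
      ring
    have := pow_eq_zero_iff (n := 2) (by norm_num) |>.mp hn2
    simpa using this
  have hs2 : s.2 = (s.1 / a.1) • (-a.2) := by
    have : a.1 • s.2 = a.1 • ((s.1 / a.1) • (-a.2)) := by
      rw [smul_smul, mul_div_cancel₀ _ (ne_of_gt ha1pos), smul_neg]
      linear_combination (norm := module) hzero
    exact smul_right_injective _ (ne_of_gt ha1pos) this
  refine ⟨s.1 / a.1, div_nonneg hs0 (le_of_lt ha1pos), Prod.ext ?_ ?_⟩
  · show s.1 = s.1 / a.1 * a.1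
    rw [div_mul_cancel₀ _ (ne_of_gt ha1pos)]
  · exact hs2
end

section
/- Let (K, L, c) be a feasibility problem where K = K^{n_1} × … × K^{n_m} is an extended second order cone, L ⊆ ℝ^n a linear subspace, c ∈ ℝ^n. Suppose there is a nonzero a ∈ K ∩ L such that H₁(a) ∪ H₂(a) ≠ ∅, and let K̃ be the relaxed cone obtained from K and a. Then (K, L, c) is strongly feasible if and only if (K̃, L, c) is strongly feasible. -/
open scoped RealInnerProductSpace Pointwise
open Classical

noncomputable section

/-- The Lorentz (second order) cone `SOC^{k+1} = {x = (x₀, x̄) : ‖x̄‖ ≤ x₀} ⊆ ℝ^{k+1}`. -/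
def SOC (k : ℕ) : Set (EuclideanSpace ℝ (Fin (k + 1))) :=
  {x | Real.sqrt (∑ j : Fin k, x j.succ ^ 2) ≤ x 0}

/-- The reflection `x' = (x₀, -x̄)` of `x` with respect to the Lorentz cone. -/
def reflect {k : ℕ} (x : EuclideanSpace ℝ (Fin (k + 1))) : EuclideanSpace ℝ (Fin (k + 1)) :=
  WithLp.toLp 2 (fun j => if j = 0 then x 0 else - x j)

/-- The closed half-space `H_d = {x : dᵀx ≥ 0}`. -/
def halfSpace {k : ℕ} (d : EuclideanSpace ℝ (Fin (k + 1))) :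
    Set (EuclideanSpace ℝ (Fin (k + 1))) :=
  {x | 0 ≤ ⟪d, x⟫}

/-- The ray `ray_d = {α • d : α ≥ 0}`. -/
def ray {k : ℕ} (d : EuclideanSpace ℝ (Fin (k + 1))) :
    Set (EuclideanSpace ℝ (Fin (k + 1))) :=
  {x | ∃ α : ℝ, 0 ≤ α ∧ x = α • d}

/-- A block of an extended second order cone: the trivial cone `{0}`, the whole space,
the Lorentz cone, a closed half-space `H_d` with `d ∈ SOC \ {0}`, or a ray `ray_d` with
`d ∈ SOC`. -/
def IsESOCBlock {k : ℕ} (B : Set (EuclideanSpace ℝ (Fin (k + 1)))) : Prop :=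
  B = {0} ∨ B = Set.univ ∨ B = SOC k ∨
    (∃ d ∈ SOC k, d ≠ 0 ∧ B = halfSpace d) ∨ ∃ d ∈ SOC k, B = ray d

/-- The total space `ℝ^n = ℝ^{n_1} × ⋯ × ℝ^{n_m}` with the Euclidean (ℓ²) structure. -/
abbrev TS {m : ℕ} (k : Fin m → ℕ) := PiLp 2 fun i => EuclideanSpace ℝ (Fin (k i + 1))

/-- The product cone `K = K^{n_1} × ⋯ × K^{n_m}` determined by the blocks `B i`. -/
def prodSet {m : ℕ} (k : Fin m → ℕ) (B : ∀ i, Set (EuclideanSpace ℝ (Fin (k i + 1)))) :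
    Set (TS k) :=
  {x | ∀ i, x i ∈ B i}

/-- `B` describes an extended second order cone (blockwise). -/
def IsESOC {m : ℕ} (k : Fin m → ℕ) (B : ∀ i, Set (EuclideanSpace ℝ (Fin (k i + 1)))) : Prop :=
  ∀ i, IsESOCBlock (B i)

/-- `H₁(a, K) = {i : K^{n_i} = SOC^{n_i}, a_{n_i} ∈ ri SOC^{n_i}}`. -/
def H1 {m : ℕ} (k : Fin m → ℕ) (B : ∀ i, Set (EuclideanSpace ℝ (Fin (k i + 1))))
    (a : TS k) : Set (Fin m) :=
  {i | B i = SOC (k i) ∧ a i ∈ intrinsicInterior ℝ (SOC (k i))}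

/-- `H₂(a, K) = {i : K^{n_i} = SOC^{n_i}, a_{n_i} ∈ (rel bd SOC^{n_i}) \ {0}}`. -/
def H2 {m : ℕ} (k : Fin m → ℕ) (B : ∀ i, Set (EuclideanSpace ℝ (Fin (k i + 1))))
    (a : TS k) : Set (Fin m) :=
  {i | B i = SOC (k i) ∧ a i ∈ intrinsicFrontier ℝ (SOC (k i)) ∧ a i ≠ 0}

/-- The relaxed cone `K̃` obtained from `K` and `a` (blockwise): block `i` becomes the whole
space if `i ∈ H₁(a, K)`, the half-space `H_{(a_{n_i})'}` if `i ∈ H₂(a, K)`, and is unchanged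
otherwise. -/
def relaxedBlocks {m : ℕ} (k : Fin m → ℕ) (B : ∀ i, Set (EuclideanSpace ℝ (Fin (k i + 1))))
    (a : TS k) : ∀ i, Set (EuclideanSpace ℝ (Fin (k i + 1))) :=
  fun i =>
    if i ∈ H1 k B a then Set.univ
    else if i ∈ H2 k B a then halfSpace (reflect (a i))
    else B i

/-- The affine set `L + c`. -/
def affineSet {V : Type*} [AddCommGroup V] [Module ℝ V] (L : Submodule ℝ V) (c : V) :
    Set V :=
  {x | x - c ∈ L}

/-- The distance between two sets. -/
def setDist {V : Type*} [NormedAddCommGroup V] (A B : Set V) : ℝ :=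
  sInf (Set.image2 dist A B)

/-- `(K, L, c)` is strongly feasible: `(L + c) ∩ ri K ≠ ∅`. -/
def StronglyFeasible {V : Type*} [NormedAddCommGroup V] [Module ℝ V]
    (K : Set V) (L : Submodule ℝ V) (c : V) : Prop :=
  (affineSet L c ∩ intrinsicInterior ℝ K).Nonempty

/-- `(K, L, c)` is weakly feasible: `K ∩ (L + c) ≠ ∅` but `(L + c) ∩ ri K = ∅`. -/
def WeaklyFeasible {V : Type*} [NormedAddCommGroup V] [Module ℝ V]
    (K : Set V) (L : Submodule ℝ V) (c : V) : Prop :=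
  (K ∩ affineSet L c).Nonempty ∧ affineSet L c ∩ intrinsicInterior ℝ K = ∅

/-- `(K, L, c)` is weakly infeasible: `K ∩ (L + c) = ∅` but `dist(K, L + c) = 0`. -/
def WeaklyInfeasible {V : Type*} [NormedAddCommGroup V] [Module ℝ V]
    (K : Set V) (L : Submodule ℝ V) (c : V) : Prop :=
  K ∩ affineSet L c = ∅ ∧ setDist K (affineSet L c) = 0

/-- `(K, L, c)` is strongly infeasible: `K ∩ (L + c) = ∅` and `dist(K, L + c) > 0`. -/
def StronglyInfeasible {V : Type*} [NormedAddCommGroup V] [Module ℝ V]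
    (K : Set V) (L : Submodule ℝ V) (c : V) : Prop :=
  K ∩ affineSet L c = ∅ ∧ 0 < setDist K (affineSet L c)

/-- `(K, L, c)` is in weak status: weakly feasible or weakly infeasible. -/
def WeakStatus {V : Type*} [NormedAddCommGroup V] [Module ℝ V]
    (K : Set V) (L : Submodule ℝ V) (c : V) : Prop :=
  WeaklyFeasible K L c ∨ WeaklyInfeasible K L c

def tl {k : ℕ} (x : EuclideanSpace ℝ (Fin (k + 1))) : EuclideanSpace ℝ (Fin k) :=
  WithLp.toLp 2 (fun j : Fin k => x j.succ)

theorem tl_apply {k : ℕ} (x : EuclideanSpace ℝ (Fin (k + 1))) (j : Fin k) : tl x j = x j.succ := rfl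

theorem norm_tl {k : ℕ} (x : EuclideanSpace ℝ (Fin (k + 1))) :
    ‖tl x‖ = Real.sqrt (∑ j : Fin k, x j.succ ^ 2) := by
  rw [EuclideanSpace.norm_eq]
  congr 1
  refine Finset.sum_congr rfl fun j _ => ?_
  rw [tl_apply, Real.norm_eq_abs, sq_abs]

theorem mem_SOC_iff {k : ℕ} {x : EuclideanSpace ℝ (Fin (k + 1))} :
    x ∈ SOC k ↔ ‖tl x‖ ≤ x 0 := by rw [SOC, Set.mem_setOf_eq, norm_tl]

theorem tl_add {k : ℕ} (x y : EuclideanSpace ℝ (Fin (k + 1))) : tl (x + y) = tl x + tl y := by ext j; simp [tl_apply]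
theorem tl_sub {k : ℕ} (x y : EuclideanSpace ℝ (Fin (k + 1))) : tl (x - y) = tl x - tl y := by ext j; simp [tl_apply]
theorem tl_smul {k : ℕ} (c : ℝ) (x : EuclideanSpace ℝ (Fin (k + 1))) : tl (c • x) = c • tl x := by ext j; simp [tl_apply]

theorem norm_sq_decomp {k : ℕ} (x : EuclideanSpace ℝ (Fin (k + 1))) :
    ‖x‖ ^ 2 = x 0 ^ 2 + ‖tl x‖ ^ 2 := by
  have h1 : ‖x‖ ^ 2 = ∑ j : Fin (k+1), x j ^ 2 := by
    rw [EuclideanSpace.norm_eq, Real.sq_sqrt (by positivity)]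
    exact Finset.sum_congr rfl fun j _ => by rw [Real.norm_eq_abs, sq_abs]
  have h2 : ‖tl x‖ ^ 2 = ∑ j : Fin k, x j.succ ^ 2 := by
    rw [norm_tl, Real.sq_sqrt (by positivity)]
  rw [h1, h2, Fin.sum_univ_succ]

theorem norm_tl_le {k : ℕ} (x : EuclideanSpace ℝ (Fin (k + 1))) : ‖tl x‖ ≤ ‖x‖ := by
  have := norm_sq_decomp x
  nlinarith [norm_nonneg (tl x), norm_nonneg x, sq_nonneg (x 0)]

theorem abs_head_le {k : ℕ} (x : EuclideanSpace ℝ (Fin (k + 1))) : |x 0| ≤ ‖x‖ := by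
  have := norm_sq_decomp x
  nlinarith [norm_nonneg (tl x), norm_nonneg x, abs_nonneg (x 0), sq_abs (x 0)]

theorem inner_euc {k : ℕ} (d x : EuclideanSpace ℝ (Fin k)) : ⟪d, x⟫ = ∑ j, d j * x j := by
  rw [PiLp.inner_apply]
  exact Finset.sum_congr rfl fun j _ => by rw [RCLike.inner_apply, conj_trivial, mul_comm]

theorem inner_reflect {k : ℕ} (a x : EuclideanSpace ℝ (Fin (k + 1))) :
    ⟪reflect a, x⟫ = a 0 * x 0 - ⟪tl a, tl x⟫ := by
  rw [inner_euc, inner_euc, Fin.sum_univ_succ]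
  have h0 : reflect a 0 = a 0 := by simp [reflect]
  have hs : ∀ j : Fin k, reflect a j.succ = - a j.succ := fun j => by
    simp [reflect, Fin.succ_ne_zero j]
  rw [h0]
  simp only [hs, tl_apply, neg_mul, Finset.sum_neg_distrib]
  ring

theorem reflect_ne_zero {k : ℕ} {a : EuclideanSpace ℝ (Fin (k + 1))} (ha : a ≠ 0) :
    reflect a ≠ 0 := by
  intro h
  apply ha
  ext j
  have := congrArg (fun v => v j) h
  by_cases hj : j = 0
  · subst hj; simpa [reflect] using this
  · simp only [reflect, hj, if_false] at this
    have : a j = 0 := by linarith [neg_eq_zero.mp this]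
    simpa using this

theorem euc_eq_sum_single {k : ℕ} (x : EuclideanSpace ℝ (Fin k)) :
    x = ∑ j, x j • EuclideanSpace.single j (1:ℝ) := by
  ext i
  have : (∑ j, x j • EuclideanSpace.single j (1:ℝ)) i = ∑ j, (x j • EuclideanSpace.single j (1:ℝ)) i := by
    rw [WithLp.ofLp_sum]; exact Finset.sum_apply i _ _
  rw [this]
  simp [EuclideanSpace.single_apply, Finset.sum_ite_eq, eq_comm]

theorem span_top_of_singles {k : ℕ} {s : Set (EuclideanSpace ℝ (Fin k))}
    (h : ∀ j : Fin k, EuclideanSpace.single j (1:ℝ) ∈ Submodule.span ℝ s) :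
    Submodule.span ℝ s = ⊤ := by
  rw [eq_top_iff]
  intro x _
  rw [euc_eq_sum_single x]
  exact Submodule.sum_mem _ fun j _ => Submodule.smul_mem _ _ (h j)

theorem single_zero_mem_SOC {k : ℕ} : EuclideanSpace.single (0 : Fin (k+1)) (1:ℝ) ∈ SOC k := by
  rw [mem_SOC_iff]
  have : tl (EuclideanSpace.single (0 : Fin (k+1)) (1:ℝ)) = 0 := by
    ext j
    simp [tl_apply, EuclideanSpace.single_apply, (Fin.succ_ne_zero j)]
  rw [this]
  simp [EuclideanSpace.single_apply]

theorem span_SOC : ∀ k : ℕ, Submodule.span ℝ (SOC k) = ⊤ := by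
  intro k
  apply span_top_of_singles
  intro j
  rcases Fin.eq_zero_or_eq_succ j with hj | ⟨i, hj⟩
  · subst hj; exact Submodule.subset_span single_zero_mem_SOC
  · subst hj
    have hmem : EuclideanSpace.single (0 : Fin (k+1)) (1:ℝ) + EuclideanSpace.single i.succ (1:ℝ) ∈ SOC k := by
      rw [mem_SOC_iff]
      have htl : tl (EuclideanSpace.single (0 : Fin (k+1)) (1:ℝ) + EuclideanSpace.single i.succ (1:ℝ))
          = EuclideanSpace.single i (1:ℝ) := by
        ext j'
        simp only [tl_apply, PiLp.add_apply, EuclideanSpace.single_apply]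
        rw [if_neg (Fin.succ_ne_zero j'), if_congr (show (j'.succ = i.succ) ↔ (j' = i) from Fin.succ_inj) rfl rfl]
        simp
      rw [htl, EuclideanSpace.norm_single]
      simp [EuclideanSpace.single_apply, Fin.succ_ne_zero i, (Fin.succ_ne_zero i).symm]
    have h0 := Submodule.subset_span (R := ℝ) (single_zero_mem_SOC (k := k))
    have h1 := Submodule.subset_span (R := ℝ) hmem
    have := Submodule.sub_mem _ h1 h0
    simpa using this

section Char
variable {V : Type*} [NormedAddCommGroup V] [NormedSpace ℝ V]

theorem mem_ri_iff {s : Set V} {x : V} :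
    x ∈ intrinsicInterior ℝ s ↔ x ∈ s ∧ ∃ ε > 0, ∀ y ∈ affineSpan ℝ s, dist y x < ε → y ∈ s := by
  constructor
  · rintro ⟨⟨x, hxspan⟩, hx, rfl⟩
    have hxs : x ∈ s := interior_subset (s := (Subtype.val ⁻¹' s : Set (affineSpan ℝ s))) hx
    rw [mem_interior_iff_mem_nhds, Metric.mem_nhds_iff] at hx
    obtain ⟨ε, hε, hball⟩ := hx
    exact ⟨hxs, ε, hε, fun y hy hdy => hball (show dist (⟨y, hy⟩ : affineSpan ℝ s) ⟨x, hxspan⟩ < ε from hdy)⟩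
  · rintro ⟨hxs, ε, hε, h⟩
    have hxspan : x ∈ affineSpan ℝ s := subset_affineSpan ℝ s hxs
    refine ⟨⟨x, hxspan⟩, ?_, rfl⟩
    rw [mem_interior_iff_mem_nhds, Metric.mem_nhds_iff]
    exact ⟨ε, hε, fun y hy => h y.1 y.2 hy⟩

theorem span_subset_affineSpan {s : Set V} (h0 : (0:V) ∈ s) :
    (Submodule.span ℝ s : Set V) ⊆ (affineSpan ℝ s : Set V) := by
  intro y hy
  have hdir : y ∈ (affineSpan ℝ s).direction := by
    rw [direction_affineSpan]
    have hsub : Submodule.span ℝ s ≤ vectorSpan ℝ s := by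
      apply Submodule.span_le.2
      intro v hv
      exact Submodule.subset_span (Set.mem_sub.2 ⟨v, hv, 0, h0, by simp⟩)
    exact hsub hy
  have := AffineSubspace.vadd_mem_of_mem_direction hdir (subset_affineSpan ℝ s h0)
  simpa using this

theorem affineSpan_top_of_span {s : Set V} (h0 : (0:V) ∈ s)
    (h : Submodule.span ℝ s = ⊤) : affineSpan ℝ s = ⊤ := by
  rw [eq_top_iff]
  intro x _
  exact span_subset_affineSpan h0 (by rw [h]; trivial)

theorem mem_ri_top {s : Set V} (hspan : affineSpan ℝ s = ⊤) {x : V} :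
    x ∈ intrinsicInterior ℝ s ↔ x ∈ s ∧ ∃ ε > 0, ∀ y, dist y x < ε → y ∈ s := by
  rw [mem_ri_iff]
  simp [hspan]

end Char

theorem zero_mem_SOC {k : ℕ} : (0 : EuclideanSpace ℝ (Fin (k+1))) ∈ SOC k := by
  rw [mem_SOC_iff]; simp [tl]; rfl

theorem zero_mem_halfSpace {k : ℕ} (d : EuclideanSpace ℝ (Fin (k+1))) : 0 ∈ halfSpace d := by
  simp [halfSpace]

theorem zero_mem_ray {k : ℕ} (d : EuclideanSpace ℝ (Fin (k+1))) : 0 ∈ ray d :=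
  ⟨0, le_refl 0, by simp⟩

theorem affineSpan_SOC_top (k : ℕ) : affineSpan ℝ (SOC k) = ⊤ :=
  affineSpan_top_of_span zero_mem_SOC (span_SOC k)

theorem ri_SOC (k : ℕ) :
    intrinsicInterior ℝ (SOC k) = {x | ‖tl x‖ < x 0} := by
  ext x
  rw [mem_ri_top (affineSpan_SOC_top k)]
  constructor
  · rintro ⟨hx, ε, hε, h⟩
    have hy : x - (ε/2) • EuclideanSpace.single (0 : Fin (k+1)) (1:ℝ) ∈ SOC k := by
      apply h
      rw [dist_eq_norm]
      rw [sub_sub_cancel_left, norm_neg, norm_smul, EuclideanSpace.norm_single, norm_one,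
        mul_one, Real.norm_eq_abs, abs_of_pos (half_pos hε)]
      linarith
    rw [mem_SOC_iff] at hy
    have htl : tl (x - (ε/2) • EuclideanSpace.single (0 : Fin (k+1)) (1:ℝ)) = tl x := by
      ext j
      simp [tl_apply, EuclideanSpace.single_apply, (Fin.succ_ne_zero j)]
    have hhd : (x - (ε/2) • EuclideanSpace.single (0 : Fin (k+1)) (1:ℝ)) 0 = x 0 - ε/2 := by
      simp [EuclideanSpace.single_apply]
    rw [htl, hhd] at hy
    have : ‖tl x‖ < x 0 := by linarith
    exact this
  · intro hx
    have hx' : ‖tl x‖ < x 0 := hx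
    refine ⟨mem_SOC_iff.2 hx'.le, (x 0 - ‖tl x‖)/2, by linarith, fun y hy => ?_⟩
    rw [mem_SOC_iff]
    rw [dist_eq_norm] at hy
    have key : tl x + (tl y - tl x) = tl y := by abel
    have h1 : ‖tl y‖ ≤ ‖tl x‖ + ‖tl y - tl x‖ := by
      calc ‖tl y‖ = ‖tl x + (tl y - tl x)‖ := by rw [key]
      _ ≤ _ := norm_add_le _ _
    have h2 : ‖tl y - tl x‖ ≤ ‖y - x‖ := by rw [← tl_sub]; exact norm_tl_le _
    have h3 : |y 0 - x 0| ≤ ‖y - x‖ := by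
      have := abs_head_le (y - x)
      simpa using this
    have h4 : x 0 - y 0 ≤ ‖y - x‖ := by
      have := abs_le.1 h3
      linarith [this.1]
    linarith

theorem affineSpan_halfSpace_top {k : ℕ} {d : EuclideanSpace ℝ (Fin (k+1))} (hd : d ≠ 0) :
    affineSpan ℝ (halfSpace d) = ⊤ := by
  apply affineSpan_top_of_span (zero_mem_halfSpace d)
  rw [eq_top_iff]
  intro v _
  by_cases hv : 0 ≤ ⟪d, v⟫
  · exact Submodule.subset_span hv
  · have : -v ∈ halfSpace d := by
      simp only [halfSpace, Set.mem_setOf_eq, inner_neg_right]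
      linarith
    have := Submodule.subset_span (R := ℝ) this
    simpa using Submodule.neg_mem _ this

theorem ri_halfSpace {k : ℕ} {d : EuclideanSpace ℝ (Fin (k+1))} (hd : d ≠ 0) :
    intrinsicInterior ℝ (halfSpace d) = {x | 0 < ⟪d, x⟫} := by
  have hdn : 0 < ‖d‖ := norm_pos_iff.2 hd
  ext x
  rw [mem_ri_top (affineSpan_halfSpace_top hd)]
  constructor
  · rintro ⟨hx, ε, hε, h⟩
    have hy : x - (ε/(2*‖d‖)) • d ∈ halfSpace d := by
      apply h
      rw [dist_eq_norm, sub_sub_cancel_left, norm_neg, norm_smul, Real.norm_eq_abs,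
        abs_of_pos (by positivity)]
      have heq : ε / (2 * ‖d‖) * ‖d‖ = ε / 2 := by field_simp
      rw [heq]; linarith
    simp only [halfSpace, Set.mem_setOf_eq, inner_sub_right, real_inner_smul_right,
      real_inner_self_eq_norm_sq] at hy ⊢
    have : (ε/(2*‖d‖)) * ‖d‖^2 > 0 := by positivity
    linarith
  · intro hx
    have hx' : 0 < ⟪d, x⟫ := hx
    refine ⟨le_of_lt hx', ⟪d, x⟫/‖d‖, by positivity, fun y hy => ?_⟩
    have hcs : |⟪d, y - x⟫| ≤ ‖d‖ * ‖y - x‖ := abs_real_inner_le_norm d (y - x)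
    have h2 : ⟪d, y⟫ = ⟪d, x⟫ + ⟪d, y - x⟫ := by rw [inner_sub_right]; ring
    rw [dist_eq_norm] at hy
    have h3 : ‖d‖ * ‖y - x‖ < ‖d‖ * (⟪d, x⟫/‖d‖) := by
      exact mul_lt_mul_of_pos_left hy hdn
    rw [mul_div_cancel₀ _ (ne_of_gt hdn)] at h3
    have h4 := abs_le.1 hcs
    show (0:ℝ) ≤ ⟪d, y⟫
    have := h4.1
    linarith

theorem mem_affineSpan_ray {k : ℕ} {d : EuclideanSpace ℝ (Fin (k+1))} {y : EuclideanSpace ℝ (Fin (k+1))}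
    (hy : y ∈ affineSpan ℝ (ray d)) : ∃ β : ℝ, y = β • d := by
  have hle : affineSpan ℝ (ray d) ≤ (Submodule.span ℝ {d}).toAffineSubspace := by
    apply affineSpan_le.2
    rintro z ⟨α, _, rfl⟩
    rw [AffineSubspace.mem_coe, Submodule.mem_toAffineSubspace]
    exact Submodule.smul_mem _ _ (Submodule.mem_span_singleton_self d)
  have h2 : y ∈ Submodule.span ℝ {d} := by
    have := hle hy
    simpa [Submodule.mem_toAffineSubspace] using this
  rw [Submodule.mem_span_singleton] at h2
  obtain ⟨β, hβ⟩ := h2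
  exact ⟨β, hβ.symm⟩

theorem ri_ray {k : ℕ} {d : EuclideanSpace ℝ (Fin (k+1))} (hd : d ≠ 0) :
    intrinsicInterior ℝ (ray d) = {x | ∃ α : ℝ, 0 < α ∧ x = α • d} := by
  have hdn : 0 < ‖d‖ := norm_pos_iff.2 hd
  ext x
  rw [mem_ri_iff]
  constructor
  · rintro ⟨⟨α, hα, rfl⟩, ε, hε, h⟩
    refine ⟨α, ?_, rfl⟩
    rcases lt_or_eq_of_le hα with h' | h'
    · exact h'
    · exfalso
      obtain ⟨β, hβ0, hβ⟩ : (α - ε/(2*‖d‖)) • d ∈ ray d := by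
        apply h
        · apply span_subset_affineSpan (zero_mem_ray d)
          exact Submodule.smul_mem _ _ (Submodule.subset_span ⟨1, zero_le_one, (one_smul ℝ d).symm⟩)
        · rw [dist_eq_norm, ← sub_smul, norm_smul, Real.norm_eq_abs]
          have : α - ε / (2 * ‖d‖) - α = -(ε / (2*‖d‖)) := by ring
          rw [this, abs_neg, abs_of_pos (by positivity)]
          have heq : ε / (2 * ‖d‖) * ‖d‖ = ε / 2 := by field_simp
          rw [heq]; linarith
      have : (α - ε/(2*‖d‖) - β) • d = 0 := by rw [sub_smul, hβ]; simp
      rw [smul_eq_zero] at this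
      rcases this with h'' | h''
      · have : α - ε/(2*‖d‖) = β := by linarith [sub_eq_zero.1 h'']
        rw [← h'] at this
        have hεd : 0 < ε/(2*‖d‖) := by positivity
        linarith
      · exact hd h''
  · rintro ⟨α, hα, rfl⟩
    refine ⟨⟨α, hα.le, rfl⟩, α * ‖d‖, by positivity, fun y hyspan hdy => ?_⟩
    obtain ⟨β, rfl⟩ := mem_affineSpan_ray hyspan
    rw [dist_eq_norm, ← sub_smul, norm_smul, Real.norm_eq_abs] at hdy
    have : |β - α| < α := by
      by_contra hc
      push_neg at hc
      have : α * ‖d‖ ≤ |β - α| * ‖d‖ := mul_le_mul_of_nonneg_right hc (le_of_lt hdn)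
      linarith
    have : 0 < β := by
      have := abs_lt.1 this
      linarith [this.1]
    exact ⟨β, this.le, rfl⟩

section Pi
variable {ι : Type*} [Fintype ι] [DecidableEq ι] {E : ι → Type*}
  [∀ i, NormedAddCommGroup (E i)] [∀ i, InnerProductSpace ℝ (E i)]

def piSet (s : ∀ i, Set (E i)) : Set (PiLp 2 E) := {x | ∀ i, x i ∈ s i}

def sgl (i : ι) : E i →ₗ[ℝ] PiLp 2 E :=
  (WithLp.linearEquiv 2 ℝ (∀ j, E j)).symm.toLinearMap ∘ₗ LinearMap.single ℝ E i

theorem sgl_apply (i : ι) (v : E i) (j : ι) : sgl i v j = Pi.single i v j := rfl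

theorem norm_sq_pi (v : PiLp 2 E) : ‖v‖ ^ 2 = ∑ i, ‖v i‖ ^ 2 := by
  have := PiLp.inner_apply (𝕜 := ℝ) v v
  rw [real_inner_self_eq_norm_sq] at this
  rw [this]
  exact Finset.sum_congr rfl fun i _ => (real_inner_self_eq_norm_sq (v i))

theorem coord_norm_le (v : PiLp 2 E) (i : ι) : ‖v i‖ ≤ ‖v‖ := by
  have h := norm_sq_pi v
  have h2 : ‖v i‖ ^ 2 ≤ ∑ j, ‖v j‖ ^ 2 :=
    Finset.single_le_sum (fun j _ => sq_nonneg ‖v j‖) (Finset.mem_univ i)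
  nlinarith [norm_nonneg v, norm_nonneg (v i)]

theorem coord_dist_le (x y : PiLp 2 E) (i : ι) : dist (x i) (y i) ≤ dist x y := by
  rw [dist_eq_norm, dist_eq_norm]
  have : x i - y i = (x - y) i := rfl
  rw [this]
  exact coord_norm_le _ i

theorem mem_affineSpan_piSet {s : ∀ i, Set (E i)} (hs : ∀ i, (s i).Nonempty) {x : PiLp 2 E} :
    x ∈ affineSpan ℝ (piSet s) ↔ ∀ i, x i ∈ affineSpan ℝ (s i) := by
  constructor
  · intro hx i
    have hle : affineSpan ℝ (piSet s) ≤
        (affineSpan ℝ (s i)).comap ((PiLp.projₗ 2 E i).toAffineMap) :=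
      affineSpan_le.2 fun z hz => subset_affineSpan ℝ _ (hz i)
    exact hle hx
  · intro hx
    choose b hb using hs
    have hbP : (WithLp.equiv 2 (∀ j, E j)).symm b ∈ piSet s := fun i => hb i
    have hkey : ∀ i, sgl i (x i - b i) ∈ (affineSpan ℝ (piSet s)).direction := by
      intro i
      have hmap : Submodule.map (sgl i) (vectorSpan ℝ (s i)) ≤ vectorSpan ℝ (piSet s) := by
        rw [vectorSpan_def, Submodule.map_span_le]
        rintro w ⟨u, hu, v, hv, rfl⟩
        have hU : (WithLp.equiv 2 (∀ j, E j)).symm (Function.update b i u) ∈ piSet s := by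
          intro j
          by_cases hj : j = i
          · subst hj; simpa [Function.update_self] using hu
          · simpa [Function.update_of_ne hj] using hb j
        have hV : (WithLp.equiv 2 (∀ j, E j)).symm (Function.update b i v) ∈ piSet s := by
          intro j
          by_cases hj : j = i
          · subst hj; simpa [Function.update_self] using hv
          · simpa [Function.update_of_ne hj] using hb j
        have heq : sgl i (u - v) = (WithLp.equiv 2 (∀ j, E j)).symm (Function.update b i u)
            - (WithLp.equiv 2 (∀ j, E j)).symm (Function.update b i v) := by
          ext j
          by_cases hj : j = i
          · subst hj
            simp [sgl_apply, Pi.single_eq_same]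
          · simp [sgl_apply, Pi.single_eq_of_ne hj]
            show (0:E j) = Function.update b i u j - Function.update b i v j
            rw [Function.update_of_ne hj, Function.update_of_ne hj, sub_self]
        show (sgl i) (u - v) ∈ vectorSpan ℝ (piSet s)
        rw [heq]
        exact vsub_mem_vectorSpan ℝ hU hV
      rw [direction_affineSpan]
      apply hmap
      refine Submodule.mem_map_of_mem ?_
      rw [← direction_affineSpan]
      exact AffineSubspace.vsub_mem_direction (hx i) (subset_affineSpan ℝ _ (hb i))
    have hsum : (∑ i, sgl i (x i - b i)) ∈ (affineSpan ℝ (piSet s)).direction :=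
      Submodule.sum_mem _ fun i _ => hkey i
    have hxeq : x = (∑ i, sgl i (x i - b i)) + (WithLp.equiv 2 (∀ j, E j)).symm b := by
      ext j
      have happ : (∑ i, sgl i (x i - b i)) j = ∑ i, sgl i (x i - b i) j := by
        rw [WithLp.ofLp_sum]; exact Finset.sum_apply j _ _
      show x j = (∑ i, sgl i (x i - b i)) j + b j
      rw [happ]
      simp only [sgl_apply]
      rw [Finset.sum_eq_single j (fun i _ hij => Pi.single_eq_of_ne (Ne.symm hij) _)
        (fun h => absurd (Finset.mem_univ j) h)]
      rw [Pi.single_eq_same]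
      abel
    have := AffineSubspace.vadd_mem_of_mem_direction hsum (subset_affineSpan ℝ _ hbP)
    rw [hxeq]
    simpa using this
end Pi

section Pi2
variable {ι : Type*} [Fintype ι] [DecidableEq ι] [Nonempty ι] {E : ι → Type*}
  [∀ i, NormedAddCommGroup (E i)] [∀ i, InnerProductSpace ℝ (E i)]

theorem ri_piSet {s : ∀ i, Set (E i)} (hs : ∀ i, (s i).Nonempty) :
    intrinsicInterior ℝ (piSet s) = {x : PiLp 2 E | ∀ i, x i ∈ intrinsicInterior ℝ (s i)} := by
  ext x
  simp only [Set.mem_setOf_eq]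
  constructor
  · intro hx
    have hxP : x ∈ piSet s := intrinsicInterior_subset hx
    rw [mem_ri_iff] at hx
    obtain ⟨-, ε, hε, h⟩ := hx
    intro i
    rw [mem_ri_iff]
    refine ⟨hxP i, ε, hε, fun yi hyi hdyi => ?_⟩
    set y : PiLp 2 E := (WithLp.equiv 2 (∀ j, E j)).symm (Function.update x i yi) with hy
    have hyspan : y ∈ affineSpan ℝ (piSet s) := by
      rw [mem_affineSpan_piSet hs]
      intro j
      by_cases hj : j = i
      · subst hj; simpa [hy, Function.update_self] using hyi
      · have : y j = x j := by simp [hy, Function.update_of_ne hj]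
        rw [this]
        exact subset_affineSpan ℝ _ (hxP j)
    have hdist : dist y x = dist yi (x i) := by
      rw [dist_eq_norm, dist_eq_norm]
      have hsq : ‖y - x‖ ^ 2 = ‖yi - x i‖ ^ 2 := by
        rw [norm_sq_pi]
        rw [Finset.sum_eq_single i]
        · congr 1
          show ‖y i - x i‖ = ‖yi - x i‖
          congr 1
          simp [hy, Function.update_self]
        · intro j _ hj
          have : y j - x j = 0 := by simp [hy, Function.update_of_ne hj]
          show ‖y j - x j‖ ^ 2 = 0
          rw [this]; simp
        · intro h; exact absurd (Finset.mem_univ i) h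
      have h1 := norm_nonneg (y - x)
      have h2 := norm_nonneg (yi - x i)
      nlinarith
    have hyP : y ∈ piSet s := h y hyspan (by rw [hdist]; exact hdyi)
    have := hyP i
    simpa [hy, Function.update_self] using this
  · intro hx
    have hxP : x ∈ piSet s := fun i => intrinsicInterior_subset (hx i)
    have hx' : ∀ i, ∃ ε > 0, ∀ y ∈ affineSpan ℝ (s i), dist y (x i) < ε → y ∈ s i :=
      fun i => (mem_ri_iff.1 (hx i)).2
    choose ε hε hball using hx'
    rw [mem_ri_iff]
    refine ⟨hxP, Finset.univ.inf' Finset.univ_nonempty ε, ?_, fun y hyspan hdy => ?_⟩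
    · rw [gt_iff_lt, Finset.lt_inf'_iff]
      exact fun i _ => hε i
    · intro i
      apply hball i _ ((mem_affineSpan_piSet hs).1 hyspan i)
      calc dist (y i) (x i) ≤ dist y x := coord_dist_le y x i
      _ < _ := hdy
      _ ≤ ε i := Finset.inf'_le _ (Finset.mem_univ i)
end Pi2

section More
variable {V : Type*} [NormedAddCommGroup V] [NormedSpace ℝ V]

theorem ri_univ' : intrinsicInterior ℝ (Set.univ : Set V) = Set.univ := by
  have hspan : affineSpan ℝ (Set.univ : Set V) = ⊤ := by
    rw [eq_top_iff]; intro x _; exact subset_affineSpan ℝ _ (Set.mem_univ x)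
  ext x
  rw [mem_ri_top hspan]
  simp only [Set.mem_univ, true_and, iff_true]
  exact ⟨1, one_pos, fun _ _ => trivial⟩

theorem notin_ri_of_mem_iFrontier {s : Set V} {x : V} (h : x ∈ intrinsicFrontier ℝ s) :
    x ∉ intrinsicInterior ℝ s := by
  rintro ⟨z, hz, rfl⟩
  obtain ⟨y, hy, hyx⟩ := h
  have hyz : y = z := Subtype.coe_injective hyx
  subst hyz
  exact hy.2 hz

theorem mem_iFrontier_of_not_ri {s : Set V} {x : V} (hxs : x ∈ s)
    (h : x ∉ intrinsicInterior ℝ s) : x ∈ intrinsicFrontier ℝ s := by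
  rw [← intrinsicClosure_diff_intrinsicInterior]
  exact ⟨subset_intrinsicClosure hxs, h⟩

end More

theorem eq_zero_of_head_tl {k : ℕ} {x : EuclideanSpace ℝ (Fin (k+1))}
    (h0 : x 0 = 0) (ht : tl x = 0) : x = 0 := by
  ext j
  rcases Fin.eq_zero_or_eq_succ j with hj | ⟨i, hj⟩
  · subst hj; exact h0
  · subst hj
    have := congrArg (fun v => v i) ht
    exact this

theorem mem_ray_zero {k : ℕ} {x : EuclideanSpace ℝ (Fin (k+1))} (h : x ∈ ray (0 : EuclideanSpace ℝ (Fin (k+1)))) :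
    x = 0 := by
  obtain ⟨α, _, rfl⟩ := h
  simp

theorem head_add_smul {k : ℕ} (x a : EuclideanSpace ℝ (Fin (k+1))) (t : ℝ) :
    (x + t • a) 0 = x 0 + t * a 0 := rfl

theorem tl_add_smul {k : ℕ} (x a : EuclideanSpace ℝ (Fin (k+1))) (t : ℝ) :
    tl (x + t • a) = tl x + t • tl a := rfl

/-- **Theorem 1(i).** Let `(K, L, c)` be a feasibility problem where
`K = K^{n_1} × ⋯ × K^{n_m}` is an extended second order cone, `L` a linear subspace and
`c` a point.  Suppose there is a nonzero `a ∈ K ∩ L` with `H₁(a) ∪ H₂(a) ≠ ∅` and let `K̃`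
be the relaxed cone obtained from `K` and `a`.  Then `(K, L, c)` is strongly feasible if and
only if `(K̃, L, c)` is strongly feasible. -/
theorem relaxation_strongly_feasible_iff {m : ℕ} (k : Fin m → ℕ)
    (B : ∀ i, Set (EuclideanSpace ℝ (Fin (k i + 1)))) (hB : IsESOC k B)
    (L : Submodule ℝ (TS k)) (c : TS k) (a : TS k)
    (haK : a ∈ prodSet k B) (haL : a ∈ L) (ha0 : a ≠ 0)
    (hH : (H1 k B a ∪ H2 k B a).Nonempty) :
    StronglyFeasible (prodSet k B) L c ↔
      StronglyFeasible (prodSet k (relaxedBlocks k B a)) L c := by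
  obtain ⟨i₀, hi₀⟩ := hH
  haveI : Nonempty (Fin m) := ⟨i₀⟩
  have h0B : ∀ i, (0 : EuclideanSpace ℝ (Fin (k i + 1))) ∈ B i := by
    intro i
    rcases hB i with h | h | h | ⟨d, _, _, h⟩ | ⟨d, _, h⟩ <;> rw [h]
    · rfl
    · trivial
    · exact zero_mem_SOC
    · exact zero_mem_halfSpace d
    · exact zero_mem_ray d
  have h0R : ∀ i, (0 : EuclideanSpace ℝ (Fin (k i + 1))) ∈ relaxedBlocks k B a i := by
    intro i
    simp only [relaxedBlocks]
    split
    · trivial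
    · split
      · exact zero_mem_halfSpace _
      · exact h0B i
  have hpiK : prodSet k B = piSet B := rfl
  have hpiR : prodSet k (relaxedBlocks k B a) = piSet (relaxedBlocks k B a) := rfl
  have hriK : intrinsicInterior ℝ (prodSet k B)
      = {x : TS k | ∀ i, x i ∈ intrinsicInterior ℝ (B i)} := by
    rw [hpiK]; exact ri_piSet fun i => ⟨0, h0B i⟩
  have hriR : intrinsicInterior ℝ (prodSet k (relaxedBlocks k B a))
      = {x : TS k | ∀ i, x i ∈ intrinsicInterior ℝ (relaxedBlocks k B a i)} := by
    rw [hpiR]; exact ri_piSet fun i => ⟨0, h0R i⟩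
  constructor
  · rintro ⟨x, hxA, hxri⟩
    refine ⟨x, hxA, ?_⟩
    rw [hriR]
    rw [hriK] at hxri
    intro i
    have hxi := hxri i
    by_cases h1 : i ∈ H1 k B a
    · have hrel : relaxedBlocks k B a i = Set.univ := by
        simp only [relaxedBlocks]; rw [if_pos h1]
      rw [hrel, ri_univ']
      trivial
    by_cases h2 : i ∈ H2 k B a
    · have hrel : relaxedBlocks k B a i = halfSpace (reflect (a i)) := by
        simp only [relaxedBlocks]; rw [if_neg h1, if_pos h2]
      rw [hrel, ri_halfSpace (reflect_ne_zero h2.2.2)]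
      obtain ⟨hBi, hfr, hane⟩ := h2
      rw [hBi, ri_SOC] at hxi
      have hxi' : ‖tl (x i)‖ < x i 0 := hxi
      have haSOC : a i ∈ SOC (k i) := by have := haK i; rwa [hBi] at this
      have hle : ‖tl (a i)‖ ≤ a i 0 := mem_SOC_iff.1 haSOC
      have hnotri := notin_ri_of_mem_iFrontier hfr
      rw [ri_SOC] at hnotri
      have heq : ‖tl (a i)‖ = a i 0 :=
        le_antisymm hle (not_lt.1 fun hc => hnotri hc)
      have ha0 : 0 < a i 0 := by
        rcases lt_or_eq_of_le (heq ▸ norm_nonneg (tl (a i))) with h | h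
        · exact h
        · exact absurd (eq_zero_of_head_tl h.symm
            (norm_eq_zero.1 (by rw [heq, ← h]))) hane
      have hcs : ⟪tl (a i), tl (x i)⟫ ≤ ‖tl (a i)‖ * ‖tl (x i)‖ := real_inner_le_norm _ _
      show 0 < ⟪reflect (a i), x i⟫
      rw [inner_reflect]
      nlinarith [norm_nonneg (tl (x i))]
    · have hrel : relaxedBlocks k B a i = B i := by
        simp only [relaxedBlocks]; rw [if_neg h1, if_neg h2]
      rw [hrel]
      exact hxi
  · rintro ⟨x, hxA, hxri⟩
    rw [hriR] at hxri
    have key : ∀ i, ∃ ti : ℝ, ∀ t, t ≥ ti → t ≥ 0 →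
        x i + t • a i ∈ intrinsicInterior ℝ (B i) := by
      intro i
      have hxi := hxri i
      by_cases h1 : i ∈ H1 k B a
      · obtain ⟨hBi, hari⟩ := h1
        rw [ri_SOC] at hari
        have hari' : ‖tl (a i)‖ < a i 0 := hari
        have hδpos : 0 < a i 0 - ‖tl (a i)‖ := by linarith
        refine ⟨(‖tl (x i)‖ - x i 0 + 1) / (a i 0 - ‖tl (a i)‖), fun t ht ht0 => ?_⟩
        rw [hBi, ri_SOC]
        show ‖tl (x i + t • a i)‖ < (x i + t • a i) 0
        rw [tl_add_smul, head_add_smul]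
        have hb1 : ‖tl (x i) + t • tl (a i)‖ ≤ ‖tl (x i)‖ + t * ‖tl (a i)‖ := by
          calc ‖tl (x i) + t • tl (a i)‖ ≤ ‖tl (x i)‖ + ‖t • tl (a i)‖ := norm_add_le _ _
          _ = ‖tl (x i)‖ + t * ‖tl (a i)‖ := by
              rw [norm_smul, Real.norm_eq_abs, abs_of_nonneg ht0]
        have hb2 : ‖tl (x i)‖ - x i 0 + 1 ≤ t * (a i 0 - ‖tl (a i)‖) :=
          (div_le_iff₀ hδpos).1 ht
        nlinarith
      by_cases h2 : i ∈ H2 k B a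
      · have hrel : relaxedBlocks k B a i = halfSpace (reflect (a i)) := by
          simp only [relaxedBlocks]; rw [if_neg h1, if_pos h2]
        rw [hrel, ri_halfSpace (reflect_ne_zero h2.2.2)] at hxi
        obtain ⟨hBi, hfr, hane⟩ := h2
        have haSOC : a i ∈ SOC (k i) := by have := haK i; rwa [hBi] at this
        have hle : ‖tl (a i)‖ ≤ a i 0 := mem_SOC_iff.1 haSOC
        have hnotri := notin_ri_of_mem_iFrontier hfr
        rw [ri_SOC] at hnotri
        have heq : ‖tl (a i)‖ = a i 0 :=
          le_antisymm hle (not_lt.1 fun hc => hnotri hc)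
        have ha0 : 0 < a i 0 := by
          rcases lt_or_eq_of_le (heq ▸ norm_nonneg (tl (a i))) with h | h
          · exact h
          · exact absurd (eq_zero_of_head_tl h.symm
              (norm_eq_zero.1 (by rw [heq, ← h]))) hane
        have hγ0 : 0 < ⟪reflect (a i), x i⟫ := hxi
        rw [inner_reflect, real_inner_comm] at hγ0
        -- now hγ0 : 0 < a i 0 * x i 0 - ⟪tl (x i), tl (a i)⟫ (check inner order)
        refine ⟨max ((‖tl (x i)‖^2 - (x i 0)^2 + 1) /
            (2 * (a i 0 * x i 0 - ⟪tl (x i), tl (a i)⟫))) ((1 - x i 0) / (a i 0)),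
          fun t ht ht0 => ?_⟩
        rw [hBi, ri_SOC]
        show ‖tl (x i + t • a i)‖ < (x i + t • a i) 0
        rw [tl_add_smul, head_add_smul]
        have hA : ‖tl (x i)‖^2 - (x i 0)^2 + 1
            ≤ t * (2 * (a i 0 * x i 0 - ⟪tl (x i), tl (a i)⟫)) :=
          (div_le_iff₀ (by positivity)).1 ((le_max_left _ _).trans ht)
        have hBnd : 1 - x i 0 ≤ t * a i 0 :=
          (div_le_iff₀ ha0).1 ((le_max_right _ _).trans ht)
        have hz0 : 0 < x i 0 + t * a i 0 := by linarith
        have hsq : ‖tl (x i) + t • tl (a i)‖^2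
            = ‖tl (x i)‖^2 + 2 * (t * ⟪tl (x i), tl (a i)⟫) + t^2 * (a i 0)^2 := by
          rw [norm_add_sq_real, real_inner_smul_right, norm_smul, Real.norm_eq_abs]
          rw [mul_pow, sq_abs, heq]
        have hv2 : ‖tl (x i) + t • tl (a i)‖^2 < (x i 0 + t * a i 0)^2 := by nlinarith
        nlinarith [norm_nonneg (tl (x i) + t • tl (a i))]
      · have hrel : relaxedBlocks k B a i = B i := by
          simp only [relaxedBlocks]; rw [if_neg h1, if_neg h2]
        rw [hrel] at hxi
        have hai : a i ∈ B i := haK i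
        rcases hB i with hb | hb | hb | ⟨d, hdS, hdne, hb⟩ | ⟨d, hdS, hb⟩
        · have hz : a i = 0 := by rw [hb] at hai; simpa using hai
          exact ⟨0, fun t _ _ => by rw [hz, smul_zero, add_zero]; exact hxi⟩
        · exact ⟨0, fun t _ _ => by rw [hb, ri_univ']; trivial⟩
        · have hz : a i = 0 := by
            by_contra hane
            rw [hb] at hai
            by_cases hri : a i ∈ intrinsicInterior ℝ (SOC (k i))
            · exact h1 ⟨hb, hri⟩
            · exact h2 ⟨hb, mem_iFrontier_of_not_ri hai hri, hane⟩
          exact ⟨0, fun t _ _ => by rw [hz, smul_zero, add_zero]; exact hxi⟩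
        · refine ⟨0, fun t ht ht0 => ?_⟩
          rw [hb, ri_halfSpace hdne] at hxi ⊢
          have hx1 : 0 < ⟪d, x i⟫ := hxi
          have hx2 : 0 ≤ ⟪d, a i⟫ := by rw [hb] at hai; exact hai
          show 0 < ⟪d, x i + t • a i⟫
          rw [inner_add_right, real_inner_smul_right]
          nlinarith
        · by_cases hd0 : d = 0
          · have hz : a i = 0 := by rw [hb, hd0] at hai; exact mem_ray_zero hai
            exact ⟨0, fun t _ _ => by rw [hz, smul_zero, add_zero]; exact hxi⟩
          · rw [hb, ri_ray hd0] at hxi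
            obtain ⟨β, hβ, hx⟩ := hxi
            have hai' : ∃ α : ℝ, 0 ≤ α ∧ a i = α • d := by rw [hb] at hai; exact hai
            obtain ⟨α, hα, ha⟩ := hai'
            refine ⟨0, fun t ht ht0 => ?_⟩
            rw [hb, ri_ray hd0]
            refine ⟨β + t * α, by nlinarith, ?_⟩
            rw [hx, ha, smul_smul, ← add_smul]
    choose ti hti using key
    set T := max 0 (Finset.univ.sup' Finset.univ_nonempty ti) with hT
    have hT0 : (0:ℝ) ≤ T := le_max_left _ _
    have hTi : ∀ i, ti i ≤ T := fun i =>
      le_trans (Finset.le_sup' ti (Finset.mem_univ i)) (le_max_right _ _)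
    refine ⟨x + T • a, ?_, ?_⟩
    · show (x + T • a) - c ∈ L
      rw [add_sub_right_comm]
      exact Submodule.add_mem L hxA (Submodule.smul_mem L T haL)
    · rw [hriK]
      intro i
      show x i + T • a i ∈ intrinsicInterior ℝ (B i)
      exact hti i T (hTi i) hT0

end
end

section
/- Let C₁ ⊆ ℝ^p × ℝ^q be a nonempty polyhedral convex set, C₂ ⊆ ℝ^p a nonempty closed convex set, and P ⊆ ℝ^q a nonempty polyhedral convex set. Suppose that rec C₁ ∩ (−(rec C₂ × rec P)) ⊆ lin C₂ × (−rec P). Then the set C₁ + (C₂ × P) is closed. -/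
open scoped Pointwise
open Filter Topology

noncomputable section

/-- A set is polyhedral if it is the intersection of finitely many closed half-spaces
`{x : aᵀx ≤ b}`. -/
def IsPolyhedral {E : Type*} [AddCommGroup E] [Module ℝ E] (s : Set E) : Prop :=
  ∃ (N : ℕ) (f : Fin N → E →ₗ[ℝ] ℝ) (b : Fin N → ℝ), s = ⋂ j, {x | f j x ≤ b j}

/-- The recession cone `rec C = {y : y + C ⊆ C}` of a set `C`. -/
def recCone {E : Type*} [AddCommGroup E] (s : Set E) : Set E :=
  {y | ∀ x ∈ s, y + x ∈ s}

/-- The lineality space `lin C = rec C ∩ (−rec C)` of a set `C`. -/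
def linSpace {E : Type*} [AddCommGroup E] (s : Set E) : Set E :=
  recCone s ∩ (-recCone s)

variable {E : Type*}

lemma recCone_nsmul_add_mem [AddCommGroup E] {s : Set E} {y : E}
    (hy : y ∈ recCone s) : ∀ (n : ℕ) {x : E}, x ∈ s → (n • y) + x ∈ s := by
  intro n
  induction n with
  | zero => intro x hx; simpa using hx
  | succ k ih =>
    intro x hx
    have h1 := hy _ (ih hx)
    have h2 : (k + 1) • y + x = y + (k • y + x) := by
      rw [succ_nsmul]; abel
    rwa [h2]

lemma smul_mem_recCone [AddCommGroup E] [Module ℝ E] {s : Set E} (hs : Convex ℝ s)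
    {y : E} (hy : y ∈ recCone s) {t : ℝ} (ht : 0 ≤ t) : t • y ∈ recCone s := by
  intro x hx
  set n : ℕ := ⌈t⌉₊ + 1 with hn
  have hn0 : (0:ℝ) < n := by positivity
  have htn : t ≤ n := (Nat.le_ceil t).trans (by exact_mod_cast Nat.le_succ _)
  have hz : (n • y) + x ∈ s := recCone_nsmul_add_mem hy n hx
  have h1 : 0 ≤ t / n := div_nonneg ht hn0.le
  have h2 : 0 ≤ 1 - t / n := by
    have : t / n ≤ 1 := (div_le_one hn0).mpr htn
    linarith
  have hc := hs hx hz h2 h1 (by ring)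
  have heq : (1 - t / n) • x + (t / n) • ((n • y) + x) = t • y + x := by
    have hnn : (n : ℝ) ≠ 0 := hn0.ne'
    rw [← Nat.cast_smul_eq_nsmul ℝ n y]
    match_scalars <;> field_simp <;> ring
  rwa [heq] at hc

lemma mem_recCone_of_tendsto [NormedAddCommGroup E] [NormedSpace ℝ E] {s : Set E}
    (hcl : IsClosed s) (hconv : Convex ℝ s) {x : ℕ → E} (hx : ∀ n, x n ∈ s)
    {t : ℕ → ℝ} (ht : Tendsto t atTop atTop) {d : E}
    (hd : Tendsto (fun n => (t n)⁻¹ • x n) atTop (𝓝 d)) : d ∈ recCone s := by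
  intro y hy
  have hev : ∀ᶠ n in atTop, (1 - (t n)⁻¹) • y + (t n)⁻¹ • x n ∈ s := by
    filter_upwards [ht.eventually_ge_atTop 1] with n hn
    have h1 : 0 < t n := lt_of_lt_of_le one_pos hn
    have h2 : (t n)⁻¹ ≤ 1 := by
      rw [inv_le_one_iff₀]; right; exact hn
    have h3 : 0 ≤ (t n)⁻¹ := by positivity
    exact hconv hy (hx n) (by linarith) h3 (by ring)
  have hinv : Tendsto (fun n => (t n)⁻¹) atTop (𝓝 0) := ht.inv_tendsto_atTop
  have hlim : Tendsto (fun n => (1 - (t n)⁻¹) • y + (t n)⁻¹ • x n) atTop (𝓝 (d + y)) := by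
    have h4 : Tendsto (fun n => y - (t n)⁻¹ • y + (t n)⁻¹ • x n) atTop (𝓝 (y - (0:ℝ) • y + d)) :=
      (tendsto_const_nhds.sub (hinv.smul_const y)).add hd
    have h5 : (fun n => y - (t n)⁻¹ • y + (t n)⁻¹ • x n)
        = fun n => (1 - (t n)⁻¹) • y + (t n)⁻¹ • x n := by
      funext n; rw [sub_smul, one_smul]
    rw [h5] at h4
    convert h4 using 2
    simp [add_comm]
  exact hcl.mem_of_tendsto hlim hev

lemma recCone_prod_subset {F : Type*} [AddCommGroup E] [AddCommGroup F]
    {A : Set E} {B : Set F} (hA : A.Nonempty) (hB : B.Nonempty) :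
    recCone (A ×ˢ B) ⊆ (recCone A) ×ˢ (recCone B) := by
  rintro ⟨y1, y2⟩ hy
  constructor
  · intro x hx; exact (hy (x, hB.choose) ⟨hx, hB.choose_spec⟩).1
  · intro x hx; exact (hy (hA.choose, x) ⟨hA.choose_spec, hx⟩).2

lemma IsPolyhedral.isClosed' {E : Type*} [NormedAddCommGroup E] [NormedSpace ℝ E]
    [FiniteDimensional ℝ E] {s : Set E} (h : IsPolyhedral s) : IsClosed s := by
  obtain ⟨N, f, b, rfl⟩ := h
  exact isClosed_iInter fun j =>
    isClosed_le (f j).continuous_of_finiteDimensional continuous_const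

lemma exists_isMinOn_of_sq_le [NormedAddCommGroup E] [NormedSpace ℝ E] [ProperSpace E]
    {S : Set E} (hS : IsClosed S) (hne : S.Nonempty) {h : E → ℝ}
    (hc : Continuous h) (hg : ∀ x, ‖x‖ ^ 2 ≤ h x) : ∃ a ∈ S, IsMinOn h S a := by
  obtain ⟨a₀, ha₀⟩ := hne
  set K := S ∩ {x | h x ≤ h a₀} with hK
  have hKcl : IsClosed K := hS.inter (isClosed_le hc continuous_const)
  have hKb : Bornology.IsBounded K := by
    rw [isBounded_iff_forall_norm_le]
    refine ⟨max 1 (h a₀), fun x hx => ?_⟩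
    rcases le_total ‖x‖ 1 with h'|h'
    · exact h'.trans (le_max_left _ _)
    · have : ‖x‖ ≤ ‖x‖ ^ 2 := by nlinarith
      exact le_max_of_le_right (this.trans ((hg x).trans hx.2))
  obtain ⟨a, haK, ha⟩ := ((Metric.isCompact_of_isClosed_isBounded hKcl hKb)).exists_isMinOn
    ⟨a₀, ha₀, (le_refl (h a₀) : h a₀ ≤ h a₀)⟩ hc.continuousOn
  refine ⟨a, haK.1, ?_⟩
  rw [isMinOn_iff]
  intro x hx
  by_cases hxa : h x ≤ h a₀
  · exact (isMinOn_iff.mp ha) x ⟨hx, hxa⟩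
  · exact le_trans ((isMinOn_iff.mp ha) a₀ ⟨ha₀, (le_refl (h a₀) : h a₀ ≤ h a₀)⟩) (le_of_not_ge hxa)

lemma tendsto_mul_atTop_of_pos {τ X : ℕ → ℝ} {c : ℝ} (hτ : Tendsto τ atTop atTop)
    (hX : Tendsto X atTop (𝓝 c)) (hc : 0 < c) :
    Tendsto (fun n => τ n * X n) atTop atTop := by
  have h1 : ∀ᶠ n in atTop, c / 2 < X n := hX.eventually (eventually_gt_nhds (by linarith))
  have h2 : ∀ᶠ n in atTop, (0:ℝ) ≤ τ n := hτ.eventually_ge_atTop 0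
  refine tendsto_atTop_mono' atTop ?_ (hτ.atTop_mul_const (half_pos hc))
  filter_upwards [h1, h2] with n h1 h2
  exact mul_le_mul_of_nonneg_left h1.le h2

lemma tendsto_mul_atBot_of_neg {τ X : ℕ → ℝ} {c : ℝ} (hτ : Tendsto τ atTop atTop)
    (hX : Tendsto X atTop (𝓝 c)) (hc : c < 0) :
    Tendsto (fun n => τ n * X n) atTop atBot := by
  have h1 : ∀ᶠ n in atTop, X n < c / 2 := hX.eventually (eventually_lt_nhds (by linarith))
  have h2 : ∀ᶠ n in atTop, (0:ℝ) ≤ τ n := hτ.eventually_ge_atTop 0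
  have hmc : Tendsto (fun x => τ x * (c / 2)) atTop atBot :=
    hτ.atTop_mul_const_of_neg (show c / 2 < 0 by linarith)
  refine tendsto_atBot_mono' atTop ?_ hmc
  filter_upwards [h1, h2] with n h1 h2
  exact mul_le_mul_of_nonneg_left h1.le h2

set_option maxHeartbeats 2000000 in
/-- **Proposition 1.** Let `C₁ ⊆ ℝ^p × ℝ^q` be a nonempty polyhedral convex set,
`C₂ ⊆ ℝ^p` a nonempty closed convex set and `P ⊆ ℝ^q` a nonempty polyhedral convex set.
Suppose that `rec C₁ ∩ (−(rec C₂ × rec P)) ⊆ lin C₂ × (−rec P)`.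
Then `C₁ + (C₂ × P)` is closed. -/
theorem sum_closed_of_recession_condition {p q : ℕ}
    (C1 : Set (EuclideanSpace ℝ (Fin p) × EuclideanSpace ℝ (Fin q)))
    (C2 : Set (EuclideanSpace ℝ (Fin p))) (P : Set (EuclideanSpace ℝ (Fin q)))
    (hC1ne : C1.Nonempty) (hC1poly : IsPolyhedral C1) (hC1conv : Convex ℝ C1)
    (hC2ne : C2.Nonempty) (hC2closed : IsClosed C2) (hC2conv : Convex ℝ C2)
    (hPne : P.Nonempty) (hPpoly : IsPolyhedral P) (hPconv : Convex ℝ P)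
    (hrec : recCone C1 ∩ (-(recCone C2 ×ˢ recCone P)) ⊆ linSpace C2 ×ˢ (-recCone P)) :
    IsClosed (C1 + C2 ×ˢ P) := by
  classical
  obtain ⟨N1, f1, b1, hC1eq⟩ := hC1poly
  obtain ⟨N2, g2, c2, hPeq⟩ := hPpoly
  have hC1closed : IsClosed C1 := IsPolyhedral.isClosed' ⟨N1, f1, b1, hC1eq⟩
  have hPclosed : IsClosed P := IsPolyhedral.isClosed' ⟨N2, g2, c2, hPeq⟩
  set D : Set (EuclideanSpace ℝ (Fin p) × EuclideanSpace ℝ (Fin q)) := C2 ×ˢ P with hDdef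
  have hDclosed : IsClosed D := hC2closed.prod hPclosed
  have hDconv : Convex ℝ D := hC2conv.prod hPconv
  set h : EuclideanSpace ℝ (Fin p) × EuclideanSpace ℝ (Fin q) → ℝ :=
    fun x => ‖x.1‖ ^ 2 + ‖x.2‖ ^ 2 with hhdef
  set ip : (EuclideanSpace ℝ (Fin p) × EuclideanSpace ℝ (Fin q)) →
      (EuclideanSpace ℝ (Fin p) × EuclideanSpace ℝ (Fin q)) → ℝ :=
    fun x y => (inner ℝ x.1 y.1 : ℝ) + (inner ℝ x.2 y.2 : ℝ) with hipdef
  have hcont : Continuous h := (continuous_fst.norm.pow 2).add (continuous_snd.norm.pow 2)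
  have hg : ∀ x : EuclideanSpace ℝ (Fin p) × EuclideanSpace ℝ (Fin q), ‖x‖ ^ 2 ≤ h x := by
    intro x
    rw [Prod.norm_def]
    show _ ≤ ‖x.1‖ ^ 2 + ‖x.2‖ ^ 2
    rcases le_total ‖x.1‖ ‖x.2‖ with h' | h'
    · rw [max_eq_right h']; nlinarith [norm_nonneg x.1]
    · rw [max_eq_left h']; nlinarith [norm_nonneg x.2]
  have hdec : ∀ (x dd : EuclideanSpace ℝ (Fin p) × EuclideanSpace ℝ (Fin q)) (t : ℝ),
      h (x - t • dd) = h x - 2 * t * ip x dd + t ^ 2 * h dd := by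
    intro x dd t
    show ‖(x - t • dd).1‖ ^ 2 + ‖(x - t • dd).2‖ ^ 2 =
      (‖x.1‖ ^ 2 + ‖x.2‖ ^ 2) - 2 * t * ((inner ℝ x.1 dd.1 : ℝ) + (inner ℝ x.2 dd.2 : ℝ))
        + t ^ 2 * (‖dd.1‖ ^ 2 + ‖dd.2‖ ^ 2)
    rw [Prod.fst_sub, Prod.snd_sub, Prod.smul_fst, Prod.smul_snd,
      norm_sub_sq_real, norm_sub_sq_real, real_inner_smul_right, real_inner_smul_right,
      norm_smul, norm_smul, Real.norm_eq_abs, mul_pow, mul_pow, sq_abs]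
    ring
  have hiplin : ∀ (c : ℝ) (x y : EuclideanSpace ℝ (Fin p) × EuclideanSpace ℝ (Fin q)),
      ip (c • x) y = c * ip x y := by
    intro c x y
    show (inner ℝ (c • x).1 y.1 : ℝ) + (inner ℝ (c • x).2 y.2 : ℝ) =
      c * ((inner ℝ x.1 y.1 : ℝ) + (inner ℝ x.2 y.2 : ℝ))
    rw [Prod.smul_fst, Prod.smul_snd, real_inner_smul_left, real_inner_smul_left]
    ring
  rw [← isSeqClosed_iff_isClosed]
  intro w u hw hu
  have hSel : ∀ n, ∃ a, (a ∈ C1 ∧ w n - a ∈ D) ∧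
      IsMinOn h {a | a ∈ C1 ∧ w n - a ∈ D} a := by
    intro n
    have hScl : IsClosed {a | a ∈ C1 ∧ w n - a ∈ D} :=
      hC1closed.inter (hDclosed.preimage (continuous_const.sub continuous_id))
    have hSne : {a | a ∈ C1 ∧ w n - a ∈ D}.Nonempty := by
      obtain ⟨x, hx, y, hy, hxy⟩ := Set.mem_add.mp (hw n)
      exact ⟨x, hx, by rw [← hxy]; simpa using hy⟩
    obtain ⟨a, ha, hmin⟩ := exists_isMinOn_of_sq_le hScl hSne hcont hg
    exact ⟨a, ha, hmin⟩
  choose A hA hAmin using hSel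
  have hbound : ∃ R : ℝ, ∀ n, ‖A n‖ ≤ R := by
    by_contra hub
    push_neg at hub
    have hfreq : ∀ m : ℕ, ∃ᶠ k in atTop, (m : ℝ) < ‖A k‖ := by
      intro m
      rw [Filter.frequently_atTop]
      intro N
      obtain ⟨n, hn⟩ := hub (max (m : ℝ)
        ((Finset.range (N + 1)).sup' ⟨0, by simp⟩ fun k => ‖A k‖))
      refine ⟨n, ?_, lt_of_le_of_lt (le_max_left _ _) hn⟩
      by_contra hnN
      push_neg at hnN
      have h1 : ‖A n‖ ≤ (Finset.range (N + 1)).sup' ⟨0, by simp⟩ fun k => ‖A k‖ :=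
        Finset.le_sup' (fun k => ‖A k‖) (Finset.mem_range.mpr (by omega))
      have h2 := lt_of_le_of_lt (le_max_right _ _) hn
      linarith
    obtain ⟨φ₁, hφ₁, hφ₁P⟩ := Filter.extraction_forall_of_frequently hfreq
    have hApos : ∀ m, 0 < ‖A (φ₁ m)‖ := fun m =>
      lt_of_le_of_lt (Nat.cast_nonneg m) (hφ₁P m)
    have hvb : ∀ m, ‖A (φ₁ m)‖⁻¹ • A (φ₁ m) ∈ Metric.closedBall
        (0 : EuclideanSpace ℝ (Fin p) × EuclideanSpace ℝ (Fin q)) 1 := by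
      intro m
      rw [mem_closedBall_zero_iff, norm_smul, Real.norm_eq_abs, abs_inv,
        abs_of_nonneg (norm_nonneg _), inv_mul_cancel₀ (hApos m).ne']
    obtain ⟨d, -, φ₂, hφ₂, hvd⟩ :=
      tendsto_subseq_of_bounded Metric.isBounded_closedBall hvb
    set ψ : ℕ → ℕ := φ₁ ∘ φ₂ with hψdef
    have hψ : StrictMono ψ := hφ₁.comp hφ₂
    set α : ℕ → EuclideanSpace ℝ (Fin p) × EuclideanSpace ℝ (Fin q) :=
      fun m => A (ψ m) with hαdef
    set τ : ℕ → ℝ := fun m => ‖α m‖ with hτdef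
    have hτpos : ∀ m, 0 < τ m := fun m => hApos (φ₂ m)
    have hτ : Tendsto τ atTop atTop := by
      apply tendsto_atTop_mono (f := fun m : ℕ => (m : ℝ))
      · intro m
        exact le_trans (by exact_mod_cast hφ₂.le_apply) (hφ₁P (φ₂ m)).le
      · exact tendsto_natCast_atTop_atTop
    have hvd' : Tendsto (fun m => (τ m)⁻¹ • α m) atTop (𝓝 d) := hvd
    have hnorm_d : ‖d‖ = 1 := by
      have h1 : Tendsto (fun m => ‖(τ m)⁻¹ • α m‖) atTop (𝓝 ‖d‖) := hvd'.norm
      have h2 : (fun m => ‖(τ m)⁻¹ • α m‖) = fun _ => (1 : ℝ) := by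
        funext m
        rw [norm_smul, Real.norm_eq_abs, abs_inv, abs_of_nonneg (norm_nonneg _),
          inv_mul_cancel₀ (hτpos m).ne']
      rw [h2] at h1
      exact tendsto_nhds_unique h1 tendsto_const_nhds
    have hdC1 : d ∈ recCone C1 :=
      mem_recCone_of_tendsto hC1closed hC1conv (fun m => (hA (ψ m)).1) hτ hvd'
    set β : ℕ → EuclideanSpace ℝ (Fin p) × EuclideanSpace ℝ (Fin q) :=
      fun m => w (ψ m) - α m with hβdef
    have hβD : ∀ m, β m ∈ D := fun m => (hA (ψ m)).2
    have hψt : Tendsto ψ atTop atTop := hψ.tendsto_atTop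
    have hβd : Tendsto (fun m => (τ m)⁻¹ • β m) atTop (𝓝 (-d)) := by
      have hinv : Tendsto (fun m => (τ m)⁻¹) atTop (𝓝 0) := hτ.inv_tendsto_atTop
      have hwu : Tendsto (fun m => w (ψ m)) atTop (𝓝 u) := hu.comp hψt
      have h0 := (hinv.smul hwu).sub hvd'
      simp only [zero_smul, zero_sub] at h0
      exact h0.congr fun m => (smul_sub _ _ _).symm
    have hmdD : -d ∈ recCone D :=
      mem_recCone_of_tendsto hDclosed hDconv hβD hτ hβd
    have hld : d ∈ linSpace C2 ×ˢ (-recCone P) := by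
      refine hrec ⟨hdC1, ?_⟩
      rw [Set.mem_neg]
      exact recCone_prod_subset hC2ne hPne hmdD
    have hd1rec : d.1 ∈ recCone C2 := hld.1.1
    have hdd : ip d d = h d := by
      show (inner ℝ d.1 d.1 : ℝ) + (inner ℝ d.2 d.2 : ℝ) = ‖d.1‖ ^ 2 + ‖d.2‖ ^ 2
      rw [real_inner_self_eq_norm_sq, real_inner_self_eq_norm_sq]
    have hddpos : 0 < ip d d := by
      rw [hdd]
      have h1 := hg d
      rw [hnorm_d] at h1
      nlinarith
    have hiptend : Tendsto (fun m => ip (α m) d) atTop atTop := by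
      have hc1 : Continuous
          (fun v : EuclideanSpace ℝ (Fin p) × EuclideanSpace ℝ (Fin q) => ip v d) :=
        (continuous_fst.inner continuous_const).add (continuous_snd.inner continuous_const)
      have hX : Tendsto (fun m => ip ((τ m)⁻¹ • α m) d) atTop (𝓝 (ip d d)) :=
        (hc1.tendsto d).comp hvd'
      have h0 := tendsto_mul_atTop_of_pos hτ hX hddpos
      refine h0.congr fun m => ?_
      rw [hiplin]
      field_simp [(hτpos m).ne']
    have hev_ip : ∀ᶠ m in atTop, 2 ≤ ip (α m) d := hiptend.eventually_ge_atTop 2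
    have hevf : ∀ᶠ m in atTop, ∀ j, f1 j d < 0 → f1 j (α m) < b1 j := by
      rw [eventually_all]
      intro j
      by_cases hj : f1 j d < 0
      · have hXt : Tendsto (fun m => (f1 j) ((τ m)⁻¹ • α m)) atTop (𝓝 (f1 j d)) :=
          ((f1 j).continuous_of_finiteDimensional.tendsto d).comp hvd'
        have h1 := tendsto_mul_atBot_of_neg hτ hXt hj
        have h2 : (fun m => τ m * (f1 j) ((τ m)⁻¹ • α m)) = fun m => f1 j (α m) := by
          funext m
          rw [map_smul, smul_eq_mul]
          field_simp [(hτpos m).ne']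
        rw [h2] at h1
        filter_upwards [h1.eventually (eventually_lt_atBot (b1 j))] with m hm _
        exact hm
      · filter_upwards with m hj'
        exact absurd hj' hj
    have hevg : ∀ᶠ m in atTop, ∀ k, 0 < g2 k d.2 → g2 k ((β m).2) < c2 k := by
      rw [eventually_all]
      intro k
      by_cases hk : 0 < g2 k d.2
      · have hsnd : Tendsto (fun m => ((τ m)⁻¹ • β m).2) atTop (𝓝 (-d).2) :=
          (continuous_snd.tendsto _).comp hβd
        have hXt : Tendsto (fun m => (g2 k) ((τ m)⁻¹ • β m).2) atTop (𝓝 (g2 k (-d).2)) :=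
          ((g2 k).continuous_of_finiteDimensional.tendsto _).comp hsnd
        have hneg : g2 k (-d).2 < 0 := by
          have he : (-d).2 = -(d.2) := rfl
          rw [he, map_neg]
          linarith
        have h1 := tendsto_mul_atBot_of_neg hτ hXt hneg
        have h2 : (fun m => τ m * (g2 k) ((τ m)⁻¹ • β m).2) = fun m => g2 k ((β m).2) := by
          funext m
          rw [Prod.smul_snd, map_smul, smul_eq_mul]
          field_simp [(hτpos m).ne']
        rw [h2] at h1
        filter_upwards [h1.eventually (eventually_lt_atBot (c2 k))] with m hm _
        exact hm
      · filter_upwards with m hk'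
        exact absurd hk' hk
    obtain ⟨m, him, hfm, hgm⟩ := (hev_ip.and (hevf.and hevg)).exists
    have hbC2 : (β m).1 ∈ C2 := (hβD m).1
    have hbP : (β m).2 ∈ P := (hβD m).2
    have htex : ∃ t : ℝ, 0 < t ∧ t ≤ 1 ∧
        (∀ j, f1 j d < 0 → t * (-(f1 j d)) ≤ b1 j - f1 j (α m)) ∧
        (∀ k, 0 < g2 k d.2 → t * g2 k d.2 ≤ c2 k - g2 k ((β m).2)) := by
      set F : Fin N1 → ℝ := fun j =>
        if f1 j d < 0 then (b1 j - f1 j (α m)) / (-(f1 j d)) else 1 with hFdef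
      set G : Fin N2 → ℝ := fun k =>
        if 0 < g2 k d.2 then (c2 k - g2 k ((β m).2)) / (g2 k d.2) else 1 with hGdef
      set S : Finset ℝ := insert (1 : ℝ)
        ((Finset.univ.image F) ∪ (Finset.univ.image G)) with hSdef
      have hS1 : (1 : ℝ) ∈ S := Finset.mem_insert_self _ _
      have hFpos : ∀ j, 0 < F j := by
        intro j
        simp only [hFdef]
        by_cases hj : f1 j d < 0
        · rw [if_pos hj]
          exact div_pos (by linarith [hfm j hj]) (by linarith)
        · rw [if_neg hj]; norm_num
      have hGpos : ∀ k, 0 < G k := by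
        intro k
        simp only [hGdef]
        by_cases hk : 0 < g2 k d.2
        · rw [if_pos hk]
          exact div_pos (by linarith [hgm k hk]) hk
        · rw [if_neg hk]; norm_num
      have hall : ∀ x ∈ S, (0:ℝ) < x := by
        intro x hx
        rw [hSdef] at hx
        rcases Finset.mem_insert.mp hx with h' | h'
        · rw [h']; norm_num
        · rcases Finset.mem_union.mp h' with h'' | h''
          · obtain ⟨j, -, hj⟩ := Finset.mem_image.mp h''
            rw [← hj]; exact hFpos j
          · obtain ⟨k, -, hk⟩ := Finset.mem_image.mp h''
            rw [← hk]; exact hGpos k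
      have ht_pos : 0 < S.min' ⟨1, hS1⟩ := hall _ (Finset.min'_mem S ⟨1, hS1⟩)
      refine ⟨S.min' ⟨1, hS1⟩, ht_pos, Finset.min'_le _ _ hS1, ?_, ?_⟩
      · intro j hj
        have hFj : S.min' ⟨1, hS1⟩ ≤ F j := Finset.min'_le _ _
          (Finset.mem_insert_of_mem (Finset.mem_union_left _
            (Finset.mem_image_of_mem F (Finset.mem_univ j))))
        simp only [hFdef] at hFj
        rw [if_pos hj] at hFj
        exact (le_div_iff₀ (by linarith : (0:ℝ) < -(f1 j d))).mp hFj
      · intro k hk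
        have hGk : S.min' ⟨1, hS1⟩ ≤ G k := Finset.min'_le _ _
          (Finset.mem_insert_of_mem (Finset.mem_union_right _
            (Finset.mem_image_of_mem G (Finset.mem_univ k))))
        simp only [hGdef] at hGk
        rw [if_pos hk] at hGk
        exact (le_div_iff₀ hk).mp hGk
    obtain ⟨t, ht_pos, ht1, htF, htG⟩ := htex
    have ha' : α m - t • d ∈ C1 := by
      rw [hC1eq, Set.mem_iInter]
      intro j
      have hfa : f1 j (α m) ≤ b1 j := by
        have h3 := (hA (ψ m)).1
        rw [hC1eq, Set.mem_iInter] at h3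
        exact h3 j
      show f1 j (α m - t • d) ≤ b1 j
      rw [map_sub, map_smul, smul_eq_mul]
      by_cases hj : f1 j d < 0
      · have h4 := htF j hj
        rw [mul_neg] at h4
        linarith
      · push_neg at hj
        have h5 : 0 ≤ t * f1 j d := mul_nonneg ht_pos.le hj
        linarith
    have hb' : β m + t • d ∈ D := by
      constructor
      · show (β m + t • d).1 ∈ C2
        rw [Prod.fst_add, Prod.smul_fst]
        have h1 : t • d.1 ∈ recCone C2 := smul_mem_recCone hC2conv hd1rec ht_pos.le
        have h2 := h1 (β m).1 hbC2
        rwa [add_comm] at h2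
      · show (β m + t • d).2 ∈ P
        rw [Prod.snd_add, Prod.smul_snd, hPeq, Set.mem_iInter]
        intro k
        have hgb : g2 k ((β m).2) ≤ c2 k := by
          have h3 := hbP
          rw [hPeq, Set.mem_iInter] at h3
          exact h3 k
        show g2 k ((β m).2 + t • d.2) ≤ c2 k
        rw [map_add, map_smul, smul_eq_mul]
        by_cases hk : 0 < g2 k d.2
        · have h4 := htG k hk
          linarith
        · push_neg at hk
          have h5 : 0 ≤ t * (-(g2 k d.2)) := mul_nonneg ht_pos.le (by linarith)
          rw [mul_neg] at h5
          linarith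
    have hmemS : α m - t • d ∈ {a | a ∈ C1 ∧ w (ψ m) - a ∈ D} := by
      refine ⟨ha', ?_⟩
      have heq : w (ψ m) - (α m - t • d) = β m + t • d := by
        simp only [hβdef]
        abel
      rw [heq]
      exact hb'
    have hkey : h (α m) ≤ h (α m - t • d) := (isMinOn_iff.mp (hAmin (ψ m))) _ hmemS
    rw [hdec] at hkey
    have hd2 : h d ≤ 2 := by
      have h1 : ‖d.1‖ ≤ 1 := by rw [← hnorm_d]; exact norm_fst_le d
      have h2 : ‖d.2‖ ≤ 1 := by rw [← hnorm_d]; exact norm_snd_le d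
      show ‖d.1‖ ^ 2 + ‖d.2‖ ^ 2 ≤ 2
      nlinarith [norm_nonneg d.1, norm_nonneg d.2]
    nlinarith [mul_nonneg ht_pos.le (sub_nonneg.mpr him),
      mul_nonneg (mul_nonneg ht_pos.le ht_pos.le) (sub_nonneg.mpr hd2),
      mul_nonneg ht_pos.le (sub_nonneg.mpr ht1), ht_pos]
  obtain ⟨R, hR⟩ := hbound
  have hAball : ∀ n, A n ∈ Metric.closedBall
      (0 : EuclideanSpace ℝ (Fin p) × EuclideanSpace ℝ (Fin q)) R := by
    intro n; rw [mem_closedBall_zero_iff]; exact hR n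
  obtain ⟨z, -, φ, hφ, hz⟩ :=
    tendsto_subseq_of_bounded Metric.isBounded_closedBall hAball
  have hzC1 : z ∈ C1 :=
    hC1closed.mem_of_tendsto hz (Filter.Eventually.of_forall fun n => (hA (φ n)).1)
  have hzd : Tendsto (fun n => w (φ n) - A (φ n)) atTop (𝓝 (u - z)) :=
    (hu.comp hφ.tendsto_atTop).sub hz
  have hmem : u - z ∈ D :=
    hDclosed.mem_of_tendsto hzd (Filter.Eventually.of_forall fun n => (hA (φ n)).2)
  exact Set.mem_add.mpr ⟨z, hzC1, u - z, hmem, by abel⟩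

end
end

section
/- Let C₁ ⊆ ℝ^p × ℝ^q be a nonempty polyhedral convex set, C₂ ⊆ ℝ^p a nonempty closed convex set, and P ⊆ ℝ^q a nonempty polyhedral convex set. Suppose that rec C₁ ∩ (rec C₂ × rec P) ⊆ lin C₂ × rec P and that C₁ ∩ (C₂ × P) = ∅. Then C₁ and C₂ × P can be strongly separated; in particular, the Euclidean distance between C₁ and C₂ × P is strictly positive. -/
open scoped Pointwise

noncomputable section

section helpers
variable {E : Type*} [AddCommGroup E] [Module ℝ E] {B : Set E}

lemma add_smul_mem_of_recCone (hB : Convex ℝ B) {y : E} (hy : y ∈ recCone B)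
    {t : ℝ} (ht : 0 ≤ t) {x : E} (hx : x ∈ B) : x + t • y ∈ B := by
  have key : ∀ n : ℕ, x + (n : ℝ) • y ∈ B := by
    intro n
    induction n with
    | zero => simpa using hx
    | succ n ih =>
      have := hy _ ih
      push_cast
      rw [add_smul, one_smul]
      convert this using 1
      abel
  rcases eq_or_lt_of_le ht with h | h
  · simpa [← h] using hx
  · set n : ℕ := ⌈t⌉₊ with hn
    have htn : t ≤ (n : ℝ) := Nat.le_ceil t
    have hn0 : (0:ℝ) < n := lt_of_lt_of_le h htn
    have hcomb := hB hx (key n) (a := 1 - t / n) (b := t / n)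
      (by rw [sub_nonneg]; exact div_le_one_of_le₀ htn hn0.le)
      (by positivity) (by ring)
    convert hcomb using 1
    rw [smul_add, smul_smul]
    rw [div_mul_cancel₀ _ hn0.ne']
    match_scalars <;> ring
end helpers

section normed
variable {E : Type*} [NormedAddCommGroup E] [NormedSpace ℝ E] {B : Set E}

lemma mem_recCone_of_basepoint (hcl : IsClosed B) (hB : Convex ℝ B) {x₀ y : E}
    (hx₀ : x₀ ∈ B) (h : ∀ t : ℝ, 0 ≤ t → x₀ + t • y ∈ B) : y ∈ recCone B := by
  intro x hx
  -- sequence aₙ = (1 - 1/n) x + (1/n)(x₀ + n y)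
  have mem : ∀ n : ℕ, 1 ≤ n → (1 - ((n:ℝ))⁻¹) • x + ((n:ℝ))⁻¹ • (x₀ + (n:ℝ) • y) ∈ B := by
    intro n hn
    have hn0 : (0:ℝ) < n := by exact_mod_cast hn
    exact hB hx (h n (by positivity))
      (by rw [sub_nonneg]; exact inv_le_one_of_one_le₀ (by exact_mod_cast hn)) (by positivity)
      (by ring)
  have heq : ∀ n : ℕ, 1 ≤ n → (1 - ((n:ℝ))⁻¹) • x + ((n:ℝ))⁻¹ • (x₀ + (n:ℝ) • y)
      = x + ((n:ℝ))⁻¹ • (x₀ - x) + y := by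
    intro n hn
    have hn0 : ((n:ℝ)) ≠ 0 := by positivity
    rw [smul_add, smul_smul, inv_mul_cancel₀ hn0]
    match_scalars <;> field_simp <;> ring
  have hlim : Filter.Tendsto (fun n : ℕ => x + ((n:ℝ))⁻¹ • (x₀ - x) + y)
      Filter.atTop (nhds (x + y)) := by
    have h1 : Filter.Tendsto (fun n : ℕ => ((n:ℝ))⁻¹) Filter.atTop (nhds 0) :=
      tendsto_inv_atTop_zero.comp tendsto_natCast_atTop_atTop
    have := ((tendsto_const_nhds (x := x)).add (h1.smul_const (x₀ - x))).add
      (tendsto_const_nhds (x := y))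
    simpa using this
  have := hcl.mem_of_tendsto hlim ?_
  · rw [add_comm]; exact this
  · filter_upwards [Filter.eventually_ge_atTop 1] with n hn
    rw [← heq n hn]; exact mem n hn
end normed

section core
variable {E : Type*} [NormedAddCommGroup E] [NormedSpace ℝ E] [FiniteDimensional ℝ E]

lemma core_lemma :
    ∀ (k : ℕ) {ι : Type} [Fintype ι] (f : ι → E →ₗ[ℝ] ℝ) (c : ι → ℝ) (B : Set E),
    B.Nonempty → IsClosed B → Convex ℝ B →
    (∀ y, (∀ j, f j y ≤ 0) → y ∈ recCone B → y ∈ linSpace B) →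
    ((⋂ j, {x : E | f j x ≤ c j}) ∩ B = ∅) →
    Module.finrank ℝ (Submodule.span ℝ (linSpace B)) ≤ k →
    ∃ δ : ℝ, 0 < δ ∧ ∀ x ∈ B, ∃ j, c j + δ ≤ f j x := by
  intro k
  induction k using Nat.strong_induction_on with
  | _ k IH =>
  intro ι _ f c B hBne hBcl hBconv hrec hdisj hk
  cases isEmpty_or_nonempty ι with
  | inl hempty =>
    exfalso
    obtain ⟨b, hb⟩ := hBne
    have : b ∈ (⋂ j, {x : E | f j x ≤ c j}) ∩ B :=
      ⟨Set.mem_iInter.mpr fun j => isEmptyElim j, hb⟩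
    rw [hdisj] at this
    exact this
  | inr hne =>
  by_contra hcon
  push_neg at hcon
  -- hcon : ∀ δ, 0 < δ → ∃ x ∈ B, ∀ j, f j x < c j + δ
  have hxn : ∀ n : ℕ, ∃ x ∈ B, ∀ j, f j x < c j + 1 / (n + 1) :=
    fun n => hcon _ (by positivity)
  choose x hxB hxlt using hxn
  by_cases hbdd : ∃ R : ℝ, ∀ n, ‖x n‖ ≤ R
  · -- bounded case
    obtain ⟨R, hR⟩ := hbdd
    have hmem : ∀ n, x n ∈ Metric.closedBall (0 : E) R := by
      intro n; simpa [Metric.mem_closedBall, dist_zero_right] using hR n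
    obtain ⟨a, -, ψ, hψmono, hψtend⟩ := (isCompact_closedBall (0 : E) R).tendsto_subseq hmem
    have haB : a ∈ B := hBcl.mem_of_tendsto hψtend (Filter.Eventually.of_forall fun n => hxB _)
    have haA : ∀ j, f j a ≤ c j := by
      intro j
      have hcont : Continuous (f j) := (f j).continuous_of_finiteDimensional
      have htend2 : Filter.Tendsto (fun n => c j + 1 / ((ψ n : ℝ) + 1))
          Filter.atTop (nhds (c j)) := by
        have h0 : Filter.Tendsto (fun n : ℕ => 1 / ((n : ℝ) + 1)) Filter.atTop (nhds 0) :=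
          tendsto_one_div_add_atTop_nhds_zero_nat
        have := (h0.comp hψmono.tendsto_atTop).const_add (c j)
        simpa using this
      exact le_of_tendsto_of_tendsto' ((hcont.tendsto a).comp hψtend) htend2
        (fun n => (hxlt (ψ n) j).le)
    have : a ∈ (⋂ j, {x : E | f j x ≤ c j}) ∩ B := ⟨Set.mem_iInter.mpr haA, haB⟩
    rw [hdisj] at this
    exact this
  · -- unbounded case
    push_neg at hbdd
    have hex : ∀ m : ℕ, ∃ n, (m : ℝ) < ‖x n‖ := fun m => hbdd m
    choose φ hφ using hex
    set y : ℕ → E := fun m => x (φ m) with hy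
    have hy_pos : ∀ m, 0 < ‖y m‖ := fun m => lt_of_le_of_lt (Nat.cast_nonneg m) (hφ m)
    have hdm : ∀ m, (‖y m‖)⁻¹ • y m ∈ Metric.sphere (0 : E) 1 := by
      intro m
      simp [mem_sphere_zero_iff_norm, norm_smul, abs_of_pos (inv_pos.mpr (hy_pos m)),
        inv_mul_cancel₀ (hy_pos m).ne']
    obtain ⟨d, hdsph, ψ, hψmono, hψtend⟩ := (isCompact_sphere (0 : E) 1).tendsto_subseq hdm
    set z : ℕ → E := fun m => y (ψ m) with hz
    have hznorm : ∀ m : ℕ, (m : ℝ) < ‖z m‖ := by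
      intro m
      have h1 : (m : ℝ) ≤ (ψ m : ℝ) := by exact_mod_cast hψmono.le_apply
      exact lt_of_le_of_lt h1 (hφ (ψ m))
    have hztend : Filter.Tendsto (fun m => ‖z m‖) Filter.atTop Filter.atTop :=
      Filter.tendsto_atTop_mono (fun m => (hznorm m).le) tendsto_natCast_atTop_atTop
    have hinv : Filter.Tendsto (fun m => (‖z m‖)⁻¹) Filter.atTop (nhds 0) :=
      tendsto_inv_atTop_zero.comp hztend
    have hdz_tend : Filter.Tendsto (fun m => (‖z m‖)⁻¹ • z m) Filter.atTop (nhds d) := hψtend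
    have hdnorm : ‖d‖ = 1 := mem_sphere_zero_iff_norm.mp hdsph
    have hzB : ∀ m, z m ∈ B := fun m => hxB _
    have hzlt : ∀ m j, f j (z m) ≤ c j + 1 := by
      intro m j
      have h1 : (1 : ℝ) / (φ (ψ m) + 1) ≤ 1 := by
        rw [div_le_one (by positivity)]
        have : (0:ℝ) ≤ (φ (ψ m) : ℝ) := Nat.cast_nonneg _
        linarith
      have := hxlt (φ (ψ m)) j
      calc f j (z m) ≤ c j + 1 / (φ (ψ m) + 1) := this.le
        _ ≤ c j + 1 := by linarith
    have hfd : ∀ j, f j d ≤ 0 := by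
      intro j
      have hcont : Continuous (f j) := (f j).continuous_of_finiteDimensional
      have hptwise : ∀ m, f j ((‖z m‖)⁻¹ • z m) ≤ (‖z m‖)⁻¹ * (c j + 1) := by
        intro m
        rw [map_smul, smul_eq_mul]
        exact mul_le_mul_of_nonneg_left (hzlt m j) (inv_nonneg.mpr (norm_nonneg _))
      have hrhs : Filter.Tendsto (fun m => (‖z m‖)⁻¹ * (c j + 1)) Filter.atTop (nhds 0) := by
        simpa using hinv.mul_const (c j + 1)
      exact le_of_tendsto_of_tendsto' ((hcont.tendsto d).comp hdz_tend) hrhs hptwise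
    have hdrec : d ∈ recCone B := by
      intro w hw
      have hlim : Filter.Tendsto
          (fun m => (1 - (‖z m‖)⁻¹) • w + (‖z m‖)⁻¹ • z m) Filter.atTop (nhds (d + w)) := by
        have h2 := hinv.smul_const w
        rw [zero_smul] at h2
        have : Filter.Tendsto (fun m => w + ((‖z m‖)⁻¹ • z m) - (‖z m‖)⁻¹ • w)
            Filter.atTop (nhds (w + d - 0)) :=
          (tendsto_const_nhds.add hdz_tend).sub h2
        rw [sub_zero] at this
        refine this.congr' (Filter.Eventually.of_forall fun m => ?_) |>.mono_right
          (by rw [add_comm])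
        module
      refine hBcl.mem_of_tendsto hlim ?_
      filter_upwards [hztend.eventually_ge_atTop 1] with m hm
      exact hBconv hw (hzB m)
        (by rw [sub_nonneg]; exact inv_le_one_of_one_le₀ hm)
        (by positivity) (by ring)
    have hdlin : d ∈ linSpace B := hrec d hfd hdrec
    have hd0 : d ≠ 0 := fun h => by simp [h] at hdnorm
    obtain ⟨g, hgnorm, hgd⟩ := exists_dual_vector ℝ d (norm_ne_zero_iff.mpr hd0)
    rw [hdnorm] at hgd
    have hgd1 : g d = 1 := by exact_mod_cast hgd
    clear hgd
    have hnegd : -d ∈ recCone B := Set.mem_neg.mp hdlin.2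
    have hshift : ∀ s : ℝ, ∀ w ∈ B, w + s • d ∈ B := by
      intro s w hw
      rcases le_or_gt 0 s with h | h
      · exact add_smul_mem_of_recCone hBconv hdlin.1 h hw
      · have heq : w + s • d = w + (-s) • (-d) := by module
        rw [heq]
        exact add_smul_mem_of_recCone hBconv hnegd (by linarith) hw
    set B₀ : Set E := B ∩ (g ⁻¹' {0}) with hB₀
    have hmemB₀ : ∀ {w : E}, w ∈ B₀ ↔ w ∈ B ∧ g w = 0 := fun {w} => Iff.rfl
    have hproj : ∀ w ∈ B, w + (-(g w)) • d ∈ B₀ := by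
      intro w hw
      refine ⟨hshift _ w hw, ?_⟩
      simp only [Set.mem_preimage, Set.mem_singleton_iff, map_add, map_smul, smul_eq_mul, hgd1]
      ring
    obtain ⟨b, hb⟩ := hBne
    have hB₀ne : B₀.Nonempty := ⟨_, hproj b hb⟩
    have hB₀cl : IsClosed B₀ := hBcl.inter (isClosed_singleton.preimage g.continuous)
    have hB₀conv : Convex ℝ B₀ := by
      refine hBconv.inter ?_
      intro a ha b hb α β hα hβ hab
      simp only [Set.mem_preimage, Set.mem_singleton_iff] at ha hb ⊢
      rw [map_add, map_smul, map_smul, ha, hb, smul_eq_mul, smul_eq_mul]; ring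
    have hrecB₀sub : ∀ {v : E}, v ∈ recCone B₀ → v ∈ recCone B ∧ g v = 0 := by
      intro v hv
      obtain ⟨b₀, hb₀⟩ := hB₀ne
      constructor
      · refine mem_recCone_of_basepoint hBcl hBconv hb₀.1 (fun t ht => ?_)
        exact (add_smul_mem_of_recCone hB₀conv hv ht hb₀).1
      · have h1 : g (v + b₀) = 0 := by simpa using (hv b₀ hb₀).2
        have h2 : g b₀ = 0 := by simpa using hb₀.2
        rw [map_add, h2, add_zero] at h1
        exact h1
    have hmemrecB₀ : ∀ {v : E}, v ∈ recCone B → g v = 0 → v ∈ recCone B₀ := by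
      intro v hvB hv0 w hw
      have hw2 : g w = 0 := by simpa using hw.2
      refine ⟨hvB w hw.1, ?_⟩
      simp only [Set.mem_preimage, Set.mem_singleton_iff, map_add, hv0, hw2, add_zero]
    set f' : ι → E →ₗ[ℝ] ℝ := fun j => if f j d = 0 then f j else 0 with hf'
    set c' : ι → ℝ := fun j => if f j d = 0 then c j else 1 with hc'
    have tchoice : ∀ (a : ι → ℝ), (∀ j, f j d = 0 → a j ≤ 0) →
        ∃ t : ℝ, 0 ≤ t ∧ ∀ j, a j + t * f j d ≤ 0 := by
      intro a ha
      refine ⟨max 0 (Finset.univ.sup' Finset.univ_nonempty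
        (fun j => if f j d = 0 then 0 else a j / (-(f j d)))), le_max_left _ _, ?_⟩
      intro j
      by_cases hj : f j d = 0
      · rw [hj, mul_zero, add_zero]; exact ha j hj
      · have hneg : f j d < 0 := lt_of_le_of_ne (hfd j) hj
        have hle : a j / (-(f j d)) ≤ max 0 (Finset.univ.sup' Finset.univ_nonempty
            (fun j => if f j d = 0 then 0 else a j / (-(f j d)))) := by
          refine le_max_of_le_right ?_
          have := Finset.le_sup' (fun j => if f j d = 0 then 0 else a j / (-(f j d)))
            (Finset.mem_univ j)
          rwa [if_neg hj] at this
        rw [div_le_iff₀ (by linarith : (0:ℝ) < -(f j d))] at hle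
        nlinarith
    have hdisj' : (⋂ j, {w : E | f' j w ≤ c' j}) ∩ B₀ = ∅ := by
      rw [Set.eq_empty_iff_forall_notMem]
      rintro w ⟨hwA', hwB₀⟩
      have hv : ∀ j, f j d = 0 → f j w - c j ≤ 0 := by
        intro j hj
        have h1 : f' j w ≤ c' j := Set.mem_iInter.mp hwA' j
        have h2 : f' j = f j := if_pos hj
        have h3 : c' j = c j := if_pos hj
        rw [h2, h3] at h1
        linarith
      obtain ⟨t, ht0, ht⟩ := tchoice (fun j => f j w - c j) hv
      have hmem : w + t • d ∈ (⋂ j, {x : E | f j x ≤ c j}) ∩ B := by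
        refine ⟨Set.mem_iInter.mpr fun j => ?_, add_smul_mem_of_recCone hBconv hdlin.1 ht0 hwB₀.1⟩
        have := ht j
        simp only [Set.mem_setOf_eq, map_add, map_smul, smul_eq_mul]
        linarith
      rw [hdisj] at hmem
      exact hmem
    have hrec' : ∀ v, (∀ j, f' j v ≤ 0) → v ∈ recCone B₀ → v ∈ linSpace B₀ := by
      intro v hv hvrec
      obtain ⟨hvB, hv0⟩ := hrecB₀sub hvrec
      obtain ⟨t, ht0, ht⟩ := tchoice (fun j => f j v) (fun j hj => by
        have h1 := hv j
        have h2 : f' j = f j := if_pos hj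
        rw [h2] at h1
        exact h1)
      have htd_rec : t • d ∈ recCone B := by
        intro w hw
        rw [add_comm]
        exact add_smul_mem_of_recCone hBconv hdlin.1 ht0 hw
      have hvd : v + t • d ∈ linSpace B := by
        refine hrec _ (fun j => ?_) (fun w hw => ?_)
        · rw [map_add, map_smul, smul_eq_mul]
          linarith [ht j]
        · rw [show v + t • d + w = v + (t • d + w) by abel]
          exact hvB _ (htd_rec w hw)
      constructor
      · exact hvrec
      · rw [Set.mem_neg]
        refine hmemrecB₀ ?_ (by rw [map_neg, hv0, neg_zero])
        have h1 : -(v + t • d) ∈ recCone B := Set.mem_neg.mp hvd.2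
        intro w hw
        have : -(v + t • d) + (t • d + w) ∈ B := h1 _ (htd_rec w hw)
        rw [show -v + w = -(v + t • d) + (t • d + w) by abel]
        exact this
    have hlinsub : linSpace B₀ ⊆ linSpace B := by
      rintro v ⟨hv1, hv2⟩
      exact ⟨(hrecB₀sub hv1).1, Set.mem_neg.mpr (hrecB₀sub (Set.mem_neg.mp hv2)).1⟩
    set W : Submodule ℝ E := Submodule.span ℝ (linSpace B) ⊓ LinearMap.ker (g.toLinearMap) with hW
    have hsub : Submodule.span ℝ (linSpace B₀) ≤ W := by
      rw [Submodule.span_le]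
      intro v hv
      have h1 : v ∈ Submodule.span ℝ (linSpace B) := Submodule.subset_span (hlinsub hv)
      have h2 : g v = 0 := (hrecB₀sub hv.1).2
      show v ∈ W
      exact Submodule.mem_inf.mpr ⟨h1, LinearMap.mem_ker.mpr h2⟩
    have hWlt : W < Submodule.span ℝ (linSpace B) := by
      refine lt_of_le_of_ne inf_le_left (fun h => ?_)
      have hdW : d ∈ W := h ▸ Submodule.subset_span hdlin
      have : g d = 0 := LinearMap.mem_ker.mp (Submodule.mem_inf.mp hdW).2
      rw [hgd1] at this
      exact one_ne_zero this
    have hklt : Module.finrank ℝ (Submodule.span ℝ (linSpace B₀)) < k :=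
      lt_of_le_of_lt (Submodule.finrank_mono hsub)
        (lt_of_lt_of_le (Submodule.finrank_lt_finrank_of_lt hWlt) hk)
    obtain ⟨δ, hδ, hsep⟩ := IH _ hklt f' c' B₀ hB₀ne hB₀cl hB₀conv hrec' hdisj' le_rfl
    obtain ⟨w, hwB, hwlt⟩ := hcon δ hδ
    have hw₀ : w + (-(g w)) • d ∈ B₀ := hproj w hwB
    obtain ⟨j, hj⟩ := hsep _ hw₀
    by_cases hjd : f j d = 0
    · have h2 : f' j = f j := if_pos hjd
      have h3 : c' j = c j := if_pos hjd
      rw [h2, h3, map_add, map_smul, smul_eq_mul, hjd, mul_zero, add_zero] at hj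
      linarith [hwlt j]
    · have h2 : f' j = 0 := if_neg hjd
      have h3 : c' j = (1:ℝ) := if_neg hjd
      rw [h2, h3, LinearMap.zero_apply] at hj
      linarith
end core

lemma abs_coord_le_norm {n : ℕ} (x : EuclideanSpace ℝ (Fin n)) (i : Fin n) : |x i| ≤ ‖x‖ := by
  rw [EuclideanSpace.norm_eq]
  calc |x i| = Real.sqrt (‖x i‖ ^ 2) := by
        rw [Real.sqrt_sq_eq_abs, Real.norm_eq_abs, abs_abs]
    _ ≤ Real.sqrt (∑ k, ‖x k‖ ^ 2) :=
        Real.sqrt_le_sqrt (Finset.single_le_sum (f := fun k => ‖x k‖ ^ 2) (fun k _ => sq_nonneg _) (Finset.mem_univ i))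


/-- **Proposition 2.** Let `C₁ ⊆ ℝ^p × ℝ^q` be a nonempty polyhedral convex set,
`C₂ ⊆ ℝ^p` a nonempty closed convex set and `P ⊆ ℝ^q` a nonempty polyhedral convex set.
Suppose that `rec C₁ ∩ (rec C₂ × rec P) ⊆ lin C₂ × rec P` and that `C₁ ∩ (C₂ × P) = ∅`.
Then `C₁` and `C₂ × P` can be strongly separated (there is a hyperplane and a ball centered
at the origin such that the two sets thickened by the ball lie in opposite open
half-spaces); in particular the distance between `C₁` and `C₂ × P` is strictly positive. -/
theorem strongly_separated_of_recession_condition {p q : ℕ}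
    (C1 : Set (EuclideanSpace ℝ (Fin p) × EuclideanSpace ℝ (Fin q)))
    (C2 : Set (EuclideanSpace ℝ (Fin p))) (P : Set (EuclideanSpace ℝ (Fin q)))
    (hC1ne : C1.Nonempty) (hC1poly : IsPolyhedral C1) (hC1conv : Convex ℝ C1)
    (hC2ne : C2.Nonempty) (hC2closed : IsClosed C2) (hC2conv : Convex ℝ C2)
    (hPne : P.Nonempty) (hPpoly : IsPolyhedral P) (hPconv : Convex ℝ P)
    (hrec : recCone C1 ∩ (recCone C2 ×ˢ recCone P) ⊆ linSpace C2 ×ˢ recCone P)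
    (hdisj : C1 ∩ C2 ×ˢ P = ∅) :
    (∃ (f : (EuclideanSpace ℝ (Fin p) × EuclideanSpace ℝ (Fin q)) →ₗ[ℝ] ℝ) (α ε : ℝ),
      0 < ε ∧
      (∀ x ∈ C1, ∀ u ∈ Metric.ball (0 : EuclideanSpace ℝ (Fin p) × EuclideanSpace ℝ (Fin q)) ε,
        f (x + u) < α) ∧
      (∀ y ∈ C2 ×ˢ P, ∀ u ∈ Metric.ball (0 : EuclideanSpace ℝ (Fin p) × EuclideanSpace ℝ (Fin q)) ε,
        α < f (y + u))) ∧
    0 < setDist C1 (C2 ×ˢ P) := by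
  classical
  obtain ⟨N₁, F₁, b₁, hC1eq⟩ := hC1poly
  obtain ⟨N₂, F₂, b₂, hPeq⟩ := hPpoly
  obtain ⟨a1, ha1⟩ := hC1ne
  obtain ⟨a2, ha2⟩ := hC2ne
  obtain ⟨a3, ha3⟩ := hPne
  -- abbreviations (plain, no generalization)
  set fst1 : ((EuclideanSpace ℝ (Fin p) × EuclideanSpace ℝ (Fin q)) × (EuclideanSpace ℝ (Fin p) × EuclideanSpace ℝ (Fin q))) →ₗ[ℝ] (EuclideanSpace ℝ (Fin p) × EuclideanSpace ℝ (Fin q)) := LinearMap.fst ℝ _ _ with hfst1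
  set snd1 : ((EuclideanSpace ℝ (Fin p) × EuclideanSpace ℝ (Fin q)) × (EuclideanSpace ℝ (Fin p) × EuclideanSpace ℝ (Fin q))) →ₗ[ℝ] (EuclideanSpace ℝ (Fin p) × EuclideanSpace ℝ (Fin q)) := LinearMap.snd ℝ _ _ with hsnd1
  set D := fst1 - snd1 with hD
  set coordP : Fin p → (EuclideanSpace ℝ (Fin p) × EuclideanSpace ℝ (Fin q)) →ₗ[ℝ] ℝ :=
    fun i => (EuclideanSpace.projₗ i).comp (LinearMap.fst ℝ (EuclideanSpace ℝ (Fin p)) (EuclideanSpace ℝ (Fin q))) with hcoordP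
  set coordQ : Fin q → (EuclideanSpace ℝ (Fin p) × EuclideanSpace ℝ (Fin q)) →ₗ[ℝ] ℝ :=
    fun i => (EuclideanSpace.projₗ i).comp (LinearMap.snd ℝ (EuclideanSpace ℝ (Fin p)) (EuclideanSpace ℝ (Fin q))) with hcoordQ
  set f : ((Fin N₁ ⊕ Fin N₂) ⊕ ((Fin p ⊕ Fin q) ⊕ (Fin p ⊕ Fin q))) → ((EuclideanSpace ℝ (Fin p) × EuclideanSpace ℝ (Fin q)) × (EuclideanSpace ℝ (Fin p) × EuclideanSpace ℝ (Fin q))) →ₗ[ℝ] ℝ :=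
    Sum.elim
      (Sum.elim (fun j => (F₁ j).comp fst1)
        (fun j => (F₂ j).comp ((LinearMap.snd ℝ (EuclideanSpace ℝ (Fin p)) (EuclideanSpace ℝ (Fin q))).comp snd1)))
      (Sum.elim
        (Sum.elim (fun i => (coordP i).comp D) (fun i => (coordQ i).comp D))
        (Sum.elim (fun i => -((coordP i).comp D)) (fun i => -((coordQ i).comp D)))) with hf
  set c : ((Fin N₁ ⊕ Fin N₂) ⊕ ((Fin p ⊕ Fin q) ⊕ (Fin p ⊕ Fin q))) → ℝ :=
    Sum.elim (Sum.elim b₁ b₂) (fun _ => 0) with hc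
  set B : Set ((EuclideanSpace ℝ (Fin p) × EuclideanSpace ℝ (Fin q)) × (EuclideanSpace ℝ (Fin p) × EuclideanSpace ℝ (Fin q))) := {w | w.2.1 ∈ C2} with hB
  -- basic facts about values of f
  have hval1 : ∀ (j : Fin N₁) (w : ((EuclideanSpace ℝ (Fin p) × EuclideanSpace ℝ (Fin q)) × (EuclideanSpace ℝ (Fin p) × EuclideanSpace ℝ (Fin q)))), f (Sum.inl (Sum.inl j)) w = F₁ j w.1 := fun j w => rfl
  have hval2 : ∀ (j : Fin N₂) (w : ((EuclideanSpace ℝ (Fin p) × EuclideanSpace ℝ (Fin q)) × (EuclideanSpace ℝ (Fin p) × EuclideanSpace ℝ (Fin q)))), f (Sum.inl (Sum.inr j)) w = F₂ j w.2.2 := fun j w => rfl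
  have hval3 : ∀ (i : Fin p) (w : ((EuclideanSpace ℝ (Fin p) × EuclideanSpace ℝ (Fin q)) × (EuclideanSpace ℝ (Fin p) × EuclideanSpace ℝ (Fin q)))),
      f (Sum.inr (Sum.inl (Sum.inl i))) w = w.1.1 i - w.2.1 i := by
    intro i w
    simp [hf, hcoordP, hD, hfst1, hsnd1, PiLp.sub_apply]
  have hval4 : ∀ (i : Fin q) (w : ((EuclideanSpace ℝ (Fin p) × EuclideanSpace ℝ (Fin q)) × (EuclideanSpace ℝ (Fin p) × EuclideanSpace ℝ (Fin q)))),
      f (Sum.inr (Sum.inl (Sum.inr i))) w = w.1.2 i - w.2.2 i := by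
    intro i w
    simp [hf, hcoordQ, hD, hfst1, hsnd1, PiLp.sub_apply]
  have hval5 : ∀ (i : Fin p) (w : ((EuclideanSpace ℝ (Fin p) × EuclideanSpace ℝ (Fin q)) × (EuclideanSpace ℝ (Fin p) × EuclideanSpace ℝ (Fin q)))),
      f (Sum.inr (Sum.inr (Sum.inl i))) w = -(w.1.1 i - w.2.1 i) := by
    intro i w
    simp [hf, hcoordP, hD, hfst1, hsnd1, PiLp.sub_apply]
  have hval6 : ∀ (i : Fin q) (w : ((EuclideanSpace ℝ (Fin p) × EuclideanSpace ℝ (Fin q)) × (EuclideanSpace ℝ (Fin p) × EuclideanSpace ℝ (Fin q)))),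
      f (Sum.inr (Sum.inr (Sum.inr i))) w = -(w.1.2 i - w.2.2 i) := by
    intro i w
    simp [hf, hcoordQ, hD, hfst1, hsnd1, PiLp.sub_apply]
  -- characterization of the constraint set with slack s
  have hchar : ∀ w (s : ℝ), (∀ j, f j w ≤ s * c j + (1 - s) * 0) → True := fun _ _ _ => trivial
  have heqchar : ∀ w : ((EuclideanSpace ℝ (Fin p) × EuclideanSpace ℝ (Fin q)) × (EuclideanSpace ℝ (Fin p) × EuclideanSpace ℝ (Fin q))), (∀ i : Fin p, w.1.1 i - w.2.1 i ≤ 0) →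
      (∀ i : Fin p, -(w.1.1 i - w.2.1 i) ≤ 0) →
      (∀ i : Fin q, w.1.2 i - w.2.2 i ≤ 0) →
      (∀ i : Fin q, -(w.1.2 i - w.2.2 i) ≤ 0) → w.1 = w.2 := by
    intro w h1 h2 h3 h4
    have hp : w.1.1 = w.2.1 := by
      apply PiLp.ext
      intro i
      have := h1 i; have := h2 i
      linarith
    have hq : w.1.2 = w.2.2 := by
      apply PiLp.ext
      intro i
      have := h3 i; have := h4 i
      linarith
    exact Prod.ext hp hq
  have hBne : B.Nonempty := ⟨(a1, (a2, a3)), ha2⟩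
  have hBcl : IsClosed B := hC2closed.preimage (continuous_fst.comp continuous_snd)
  have hBconv : Convex ℝ B := by
    intro w1 h1 w2 h2 α β hα hβ hab
    have : (α • w1 + β • w2).2.1 = α • w1.2.1 + β • w2.2.1 := rfl
    show (α • w1 + β • w2).2.1 ∈ C2
    rw [this]
    exact hC2conv h1 h2 hα hβ hab
  have hC1mem : ∀ w : EuclideanSpace ℝ (Fin p) × EuclideanSpace ℝ (Fin q), w ∈ C1 ↔ ∀ j, F₁ j w ≤ b₁ j := by
    intro w
    rw [hC1eq]
    simp [Set.mem_iInter]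
  have hPmem : ∀ w : EuclideanSpace ℝ (Fin q), w ∈ P ↔ ∀ j, F₂ j w ≤ b₂ j := by
    intro w
    rw [hPeq]
    simp [Set.mem_iInter]
  have hrecfun : ∀ y : ((EuclideanSpace ℝ (Fin p) × EuclideanSpace ℝ (Fin q)) × (EuclideanSpace ℝ (Fin p) × EuclideanSpace ℝ (Fin q))), (∀ j, f j y ≤ 0) → y ∈ recCone B → y ∈ linSpace B := by
    intro y hy hyrec
    have heq : y.1 = y.2 :=
      heqchar y (fun i => by have := hy (Sum.inr (Sum.inl (Sum.inl i))); rwa [hval3] at this)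
        (fun i => by have := hy (Sum.inr (Sum.inr (Sum.inl i))); rwa [hval5] at this)
        (fun i => by have := hy (Sum.inr (Sum.inl (Sum.inr i))); rwa [hval4] at this)
        (fun i => by have := hy (Sum.inr (Sum.inr (Sum.inr i))); rwa [hval6] at this)
    have hr1 : y.1 ∈ recCone C1 := by
      intro x hx
      rw [hC1mem] at hx ⊢
      intro j
      have h1 := hy (Sum.inl (Sum.inl j))
      rw [hval1] at h1
      rw [map_add]
      linarith [hx j]
    have hr2 : y.1.2 ∈ recCone P := by
      intro x hx
      rw [hPmem] at hx ⊢
      intro j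
      have h1 := hy (Sum.inl (Sum.inr j))
      rw [hval2] at h1
      rw [map_add]
      have h2 : y.2.2 = y.1.2 := by rw [heq]
      rw [h2] at h1
      linarith [hx j]
    have hr3 : y.2.1 ∈ recCone C2 := by
      intro x hx
      have := hyrec (a1, (x, a3)) (by exact hx)
      exact this
    have hr1' : y.1.1 ∈ recCone C2 := by
      have h2 : y.1.1 = y.2.1 := by rw [heq]
      rw [h2]; exact hr3
    have hmem := hrec ⟨hr1, Set.mem_prod.mpr ⟨hr1', hr2⟩⟩
    have hlin : y.1.1 ∈ linSpace C2 := (Set.mem_prod.mp hmem).1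
    refine ⟨hyrec, ?_⟩
    rw [Set.mem_neg]
    intro w hw
    show (-y + w).2.1 ∈ C2
    have hcomp : (-y + w).2.1 = -y.2.1 + w.2.1 := rfl
    rw [hcomp]
    have h2 : -y.2.1 = -y.1.1 := by rw [heq]
    rw [h2]
    have : -y.1.1 ∈ recCone C2 := Set.mem_neg.mp hlin.2
    exact this w.2.1 hw
  have hdisjAB : (⋂ j, {w | f j w ≤ c j}) ∩ B = ∅ := by
    rw [Set.eq_empty_iff_forall_notMem]
    rintro w ⟨hwA, hwB⟩
    have hall : ∀ j, f j w ≤ c j := fun j => Set.mem_iInter.mp hwA j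
    have heq : w.1 = w.2 :=
      heqchar w (fun i => by have := hall (Sum.inr (Sum.inl (Sum.inl i))); rwa [hval3] at this)
        (fun i => by have := hall (Sum.inr (Sum.inr (Sum.inl i))); rwa [hval5] at this)
        (fun i => by have := hall (Sum.inr (Sum.inl (Sum.inr i))); rwa [hval4] at this)
        (fun i => by have := hall (Sum.inr (Sum.inr (Sum.inr i))); rwa [hval6] at this)
    have hw1 : w.1 ∈ C1 := by
      rw [hC1mem]
      intro j
      have := hall (Sum.inl (Sum.inl j))
      rwa [hval1] at this
    have hw2 : w.1.2 ∈ P := by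
      rw [hPmem]
      intro j
      have := hall (Sum.inl (Sum.inr j))
      rw [hval2] at this
      rwa [← heq] at this
    have hw3 : w.1.1 ∈ C2 := by
      have : w.2.1 ∈ C2 := hwB
      rwa [← heq] at this
    have : w.1 ∈ C1 ∩ C2 ×ˢ P := ⟨hw1, Set.mem_prod.mpr ⟨hw3, hw2⟩⟩
    rw [hdisj] at this
    exact this
  obtain ⟨δ, hδ, hsep⟩ := core_lemma
    (Module.finrank ℝ (Submodule.span ℝ (linSpace B))) f c B hBne hBcl hBconv hrecfun hdisjAB le_rfl
  -- distance estimate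
  have hdist : ∀ u ∈ C1, ∀ v ∈ C2 ×ˢ P, δ ≤ dist u v := by
    intro u hu v hv
    obtain ⟨j, hj⟩ := hsep (u, v) hv.1
    have habsP : ∀ i : Fin p, |u.1 i - v.1 i| ≤ dist u v := by
      intro i
      rw [dist_eq_norm]
      calc |u.1 i - v.1 i| = |(u.1 - v.1) i| := by rw [PiLp.sub_apply]
        _ ≤ ‖u.1 - v.1‖ := abs_coord_le_norm _ _
        _ = ‖(u - v).1‖ := rfl
        _ ≤ ‖u - v‖ := norm_fst_le _
    have habsQ : ∀ i : Fin q, |u.2 i - v.2 i| ≤ dist u v := by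
      intro i
      rw [dist_eq_norm]
      calc |u.2 i - v.2 i| = |(u.2 - v.2) i| := by rw [PiLp.sub_apply]
        _ ≤ ‖u.2 - v.2‖ := abs_coord_le_norm _ _
        _ = ‖(u - v).2‖ := rfl
        _ ≤ ‖u - v‖ := norm_snd_le _
    rcases j with (j | j) | ((i | i) | (i | i))
    · exfalso
      rw [hval1] at hj
      have h1 : F₁ j u ≤ b₁ j := (hC1mem u).mp hu j
      have h2 : c (Sum.inl (Sum.inl j)) = b₁ j := rfl
      rw [h2] at hj
      linarith
    · exfalso
      rw [hval2] at hj
      have h1 : F₂ j v.2 ≤ b₂ j := (hPmem v.2).mp hv.2 j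
      have h2 : c (Sum.inl (Sum.inr j)) = b₂ j := rfl
      rw [h2] at hj
      linarith
    · rw [hval3] at hj
      have h2 : c (Sum.inr (Sum.inl (Sum.inl i))) = 0 := rfl
      rw [h2] at hj
      calc δ ≤ u.1 i - v.1 i := by linarith
        _ ≤ |u.1 i - v.1 i| := le_abs_self _
        _ ≤ dist u v := habsP i
    · rw [hval4] at hj
      have h2 : c (Sum.inr (Sum.inl (Sum.inr i))) = 0 := rfl
      rw [h2] at hj
      calc δ ≤ u.2 i - v.2 i := by linarith
        _ ≤ |u.2 i - v.2 i| := le_abs_self _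
        _ ≤ dist u v := habsQ i
    · rw [hval5] at hj
      have h2 : c (Sum.inr (Sum.inr (Sum.inl i))) = 0 := rfl
      rw [h2] at hj
      calc δ ≤ -(u.1 i - v.1 i) := by linarith
        _ ≤ |u.1 i - v.1 i| := neg_le_abs _
        _ ≤ dist u v := habsP i
    · rw [hval6] at hj
      have h2 : c (Sum.inr (Sum.inr (Sum.inr i))) = 0 := rfl
      rw [h2] at hj
      calc δ ≤ -(u.2 i - v.2 i) := by linarith
        _ ≤ |u.2 i - v.2 i| := neg_le_abs _
        _ ≤ dist u v := habsQ i
  have hsd : δ ≤ setDist C1 (C2 ×ˢ P) := by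
    apply le_csInf
    · exact ⟨dist a1 (a2, a3), Set.mem_image2_of_mem ha1 (Set.mem_prod.mpr ⟨ha2, ha3⟩)⟩
    · rintro b ⟨u, hu, v, hv, rfl⟩
      exact hdist u hu v hv
  constructor
  · -- strong separation
    set ε := δ / 2 with hε
    have hεpos : 0 < ε := by positivity
    set U := C1 + Metric.ball 0 ε with hU
    set V := (C2 ×ˢ P) + Metric.ball 0 ε with hV
    have hUopen : IsOpen U := Metric.isOpen_ball.add_left
    have hVopen : IsOpen V := Metric.isOpen_ball.add_left
    have hUconv : Convex ℝ U := hC1conv.add (convex_ball 0 ε)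
    have hVconv : Convex ℝ V := (hC2conv.prod hPconv).add (convex_ball 0 ε)
    have hdisjUV : Disjoint U V := by
      rw [Set.disjoint_left]
      rintro z ⟨a, ha, u1, hu1, rfl⟩ ⟨b2, hb2, u2, hu2, hz⟩
      have hn1 : ‖u1‖ < ε := by rwa [Metric.mem_ball, dist_zero_right] at hu1
      have hn2 : ‖u2‖ < ε := by rwa [Metric.mem_ball, dist_zero_right] at hu2
      have hz' : b2 + u2 = a + u1 := hz
      have hab : a - b2 = u2 - u1 := by
        have h0 : (a - b2) - (u2 - u1) = (a + u1) - (b2 + u2) := by abel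
        rw [hz', sub_self] at h0
        exact sub_eq_zero.mp h0
      have : dist a b2 ≤ ‖u2‖ + ‖u1‖ := by
        rw [dist_eq_norm, hab]
        exact norm_sub_le _ _
      have hd := hdist a ha b2 hb2
      rw [hε] at hn1 hn2
      linarith
    obtain ⟨g, α, hg1, hg2⟩ := geometric_hahn_banach_open_open hUconv hUopen hVconv hVopen hdisjUV
    refine ⟨g.toLinearMap, α, ε, hεpos, ?_, ?_⟩
    · intro x hx u hu
      exact hg1 _ (Set.add_mem_add hx hu)
    · intro y hy u hu
      exact hg2 _ (Set.add_mem_add hy hu)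
  · exact lt_of_lt_of_le hδ hsd


end
end
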